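/- arXiv:1304.6271 — 4 statements merged into one kernel-verified Lean document; each statement's English description precedes it below -/
import Mathlib

section
/- For all r, s > 0, all x ∈ X and every bounded Borel function f : X → ℝ, the averaging operators satisfy Q_r(Q_s f)(x) = Q_s(Q_r f)(x) = Q_{max{r,s}} f(x); in particular each Q_r is idempotent. -/
open MeasureTheory Metric Filter
open scoped ENNReal Classical

/-- The averaging operator `Q_r f(x) = μ(B_r(x))⁻¹ ∫_{B_r(x)} f dμ`. -/
noncomputable def avgOp {X : Type*} [MetricSpace X] [MeasurableSpace X]
    (μ : Measure X) (r : ℝ) (f : X → ℝ) (x : X) : ℝ :=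
  (μ (closedBall x r)).toReal⁻¹ * ∫ y in closedBall x r, f y ∂μ

/-- The isotropic Markov operator `P^t f(x) = ∫_[0,∞) Q_r f(x) dσ^t(r)`,
where `νt` is the Lebesgue–Stieltjes measure of `σ^t`. -/
noncomputable def isoOp {X : Type*} [MetricSpace X] [MeasurableSpace X]
    (μ : Measure X) (νt : Measure ℝ) (f : X → ℝ) (x : X) : ℝ :=
  ∫ r in Set.Ici (0:ℝ), avgOp μ r f x ∂νt

/-- The heat kernel `p(t,x,y) = ∫_[d(x,y),∞) μ(B_r(x))⁻¹ dσ^t(r)`. -/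
noncomputable def heatK {X : Type*} [MetricSpace X] [MeasurableSpace X]
    (μ : Measure X) (ν : ℝ → Measure ℝ) (t : ℝ) (x y : X) : ℝ≥0∞ :=
  ∫⁻ r in Set.Ici (dist x y), (μ (closedBall x r))⁻¹ ∂(ν t)

/-- The intrinsic ultra-metric `d_*(x,y) = 1/log(1/σ(d(x,y)))` for `x ≠ y`. -/
noncomputable def dstar {X : Type*} [MetricSpace X] (σ : ℝ → ℝ) (x y : X) : ℝ :=
  if x = y then 0 else 1 / Real.log (1 / σ (dist x y))

/-- The closed ball `B*_s(x)` of the intrinsic ultra-metric. -/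
def starBall {X : Type*} [MetricSpace X] (σ : ℝ → ℝ) (x : X) (s : ℝ) : Set X :=
  {y | dstar σ x y ≤ s}

/-- The spectral distribution function `N(x,τ) = 1/μ(B*_{1/τ}(x))`. -/
noncomputable def specN {X : Type*} [MetricSpace X] [MeasurableSpace X]
    (μ : Measure X) (σ : ℝ → ℝ) (x : X) (τ : ℝ) : ℝ≥0∞ :=
  (μ (starBall σ x (1 / τ)))⁻¹

/-- The Green function `g(x,y) = ∫_0^∞ p(t,x,y) dt`. -/
noncomputable def greenF {X : Type*} [MetricSpace X] [MeasurableSpace X]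
    (μ : Measure X) (ν : ℝ → Measure ℝ) (x y : X) : ℝ≥0∞ :=
  ∫⁻ t in Set.Ioi (0:ℝ), heatK μ ν t x y

set_option linter.unusedSectionVars false
section Ultra

variable {X : Type*} [MetricSpace X]

lemma ultra_ball_eq (hd : ∀ x y z : X, dist x z ≤ max (dist x y) (dist y z))
    {a b : X} {s : ℝ} (h : dist a b ≤ s) : closedBall a s = closedBall b s := by
  ext w
  simp only [mem_closedBall]
  constructor <;> intro hw
  · exact (hd w a b).trans (max_le hw h)
  · exact (hd w b a).trans (max_le hw (by rwa [dist_comm]))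

lemma ultra_ball_subset (hd : ∀ x y z : X, dist x z ≤ max (dist x y) (dist y z))
    {a b : X} {s r : ℝ} (hsr : s ≤ r) (h : dist b a ≤ r) :
    closedBall b s ⊆ closedBall a r := fun w hw =>
  (hd w b a).trans (max_le ((mem_closedBall.mp hw).trans hsr) h)

lemma ultra_ball_disj (hd : ∀ x y z : X, dist x z ≤ max (dist x y) (dist y z))
    {a b : X} {s : ℝ} (h : ¬ dist a b ≤ s) :
    Disjoint (closedBall a s) (closedBall b s) := by
  rw [Set.disjoint_left]
  intro w hwa hwb
  exact h ((hd a w b).trans (max_le (by rw [dist_comm]; exact mem_closedBall.mp hwa)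
    (mem_closedBall.mp hwb)))

lemma ultra_ball_isOpen (hd : ∀ x y z : X, dist x z ≤ max (dist x y) (dist y z))
    {a : X} {s : ℝ} (hs : 0 < s) : IsOpen (closedBall a s) := by
  rw [Metric.isOpen_iff]
  intro z hz
  exact ⟨s, hs, fun w hw =>
    (hd w z a).trans (max_le (le_of_lt (mem_ball.mp hw)) hz)⟩

variable [MeasurableSpace X] [BorelSpace X] {μ : Measure X}

lemma avg_locConst (hd : ∀ x y z : X, dist x z ≤ max (dist x y) (dist y z))
    (μ : Measure X) (f : X → ℝ) {a b : X} {s : ℝ} (h : dist a b ≤ s) :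
    avgOp μ s f a = avgOp μ s f b := by
  unfold avgOp; rw [ultra_ball_eq hd h]

lemma avg_continuous (hd : ∀ x y z : X, dist x z ≤ max (dist x y) (dist y z))
    (μ : Measure X) (f : X → ℝ) {s : ℝ} (hs : 0 < s) :
    Continuous (avgOp μ s f) := by
  apply IsLocallyConstant.continuous
  rw [IsLocallyConstant.iff_exists_open]
  intro a
  exact ⟨closedBall a s, ultra_ball_isOpen hd hs, mem_closedBall_self hs.le,
    fun b hb => avg_locConst hd μ f (mem_closedBall.mp hb)⟩

lemma toReal_ne_zero_of (hpos : (0:ℝ≥0∞) < v) (hfin : v < ⊤) : v.toReal ≠ 0 :=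
  (ENNReal.toReal_pos hpos.ne' hfin.ne).ne'

lemma avg_bound
    (hμpos : ∀ (x : X) (r : ℝ), 0 < r → 0 < μ (closedBall x r))
    (hμfin : ∀ (x : X) (r : ℝ), 0 < r → μ (closedBall x r) < ⊤)
    {f : X → ℝ} (hf : Measurable f) {M : ℝ} (hfb : ∀ y, |f y| ≤ M) {s : ℝ} (hs : 0 < s) (y : X) :
    |avgOp μ s f y| ≤ M := by
  have hfin := hμfin y s hs
  have htR : (0:ℝ) < (μ (closedBall y s)).toReal :=
    ENNReal.toReal_pos (hμpos y s hs).ne' hfin.ne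
  have hbnd : ‖∫ z in closedBall y s, f z ∂μ‖ ≤ M * (μ (closedBall y s)).toReal :=
    norm_setIntegral_le_of_norm_le_const hfin (fun z _ => by
      simpa [Real.norm_eq_abs] using hfb z)
  rw [avgOp, abs_mul, abs_inv, abs_of_pos htR]
  rw [Real.norm_eq_abs] at hbnd
  calc (μ (closedBall y s)).toReal⁻¹ * |∫ z in closedBall y s, f z ∂μ|
      ≤ (μ (closedBall y s)).toReal⁻¹ * (M * (μ (closedBall y s)).toReal) := by
        exact mul_le_mul_of_nonneg_left hbnd (by positivity)
    _ = M := by field_simp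

lemma integrableOn_of_bound {g : X → ℝ} (hg : Measurable g)
    {M : ℝ} (hb : ∀ y, |g y| ≤ M) {B : Set X} (hB : μ B < ⊤) :
    IntegrableOn g B μ := by
  have : IsFiniteMeasure (μ.restrict B) := ⟨by rwa [Measure.restrict_apply_univ]⟩
  exact ⟨hg.aestronglyMeasurable,
    HasFiniteIntegral.of_bounded (C := M)
      (Eventually.of_forall fun y => by simpa [Real.norm_eq_abs] using hb y)⟩

/-- Constant case: `r ≤ s`. -/
lemma avg_comp_le (hd : ∀ x y z : X, dist x z ≤ max (dist x y) (dist y z))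
    (hμpos : ∀ (x : X) (r : ℝ), 0 < r → 0 < μ (closedBall x r))
    (hμfin : ∀ (x : X) (r : ℝ), 0 < r → μ (closedBall x r) < ⊤)
    {r s : ℝ} (hr : 0 < r) (hrs : r ≤ s) (f : X → ℝ) (x : X) :
    avgOp μ r (avgOp μ s f) x = avgOp μ s f x := by
  have hconst : Set.EqOn (avgOp μ s f) (fun _ => avgOp μ s f x) (closedBall x r) :=
    fun y hy => avg_locConst hd μ f ((mem_closedBall.mp hy).trans hrs)
  have hne : (μ (closedBall x r)).toReal ≠ 0 :=
    (ENNReal.toReal_pos (hμpos x r hr).ne' (hμfin x r hr).ne).ne'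
  rw [avgOp, setIntegral_congr_fun measurableSet_closedBall hconst, setIntegral_const,
    smul_eq_mul, measureReal_def, ← mul_assoc, inv_mul_cancel₀ hne, one_mul]

/-- Integral of the average over one small ball equals integral of `f`. -/
lemma integral_avg_ball (hd : ∀ x y z : X, dist x z ≤ max (dist x y) (dist y z))
    (hμpos : ∀ (x : X) (r : ℝ), 0 < r → 0 < μ (closedBall x r))
    (hμfin : ∀ (x : X) (r : ℝ), 0 < r → μ (closedBall x r) < ⊤)
    {s : ℝ} (hs : 0 < s) (f : X → ℝ) (y : X) :
    ∫ z in closedBall y s, avgOp μ s f z ∂μ = ∫ z in closedBall y s, f z ∂μ := by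
  have hconst : Set.EqOn (avgOp μ s f) (fun _ => avgOp μ s f y) (closedBall y s) :=
    fun z hz => avg_locConst hd μ f (mem_closedBall.mp hz)
  have hne : (μ (closedBall y s)).toReal ≠ 0 :=
    (ENNReal.toReal_pos (hμpos y s hs).ne' (hμfin y s hs).ne).ne'
  rw [setIntegral_congr_fun measurableSet_closedBall hconst, setIntegral_const,
    smul_eq_mul, measureReal_def, avgOp, ← mul_assoc, mul_inv_cancel₀ hne, one_mul]

/-- Partition case: `s ≤ r`. -/
lemma avg_comp_ge (hd : ∀ x y z : X, dist x z ≤ max (dist x y) (dist y z))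
    (hcb : ∀ (x : X) (r : ℝ), IsCompact (closedBall x r))
    (hμpos : ∀ (x : X) (r : ℝ), 0 < r → 0 < μ (closedBall x r))
    (hμfin : ∀ (x : X) (r : ℝ), 0 < r → μ (closedBall x r) < ⊤)
    {r s : ℝ} (hs : 0 < s) (hsr : s ≤ r)
    {f : X → ℝ} (hf : Measurable f) {M : ℝ} (hfb : ∀ y, |f y| ≤ M) (x : X) :
    avgOp μ r (avgOp μ s f) x = avgOp μ r f x := by
  have hr : 0 < r := hs.trans_le hsr
  suffices h : ∫ z in closedBall x r, avgOp μ s f z ∂μ = ∫ z in closedBall x r, f z ∂μ by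
    rw [avgOp, h, avgOp]
  -- finite subcover by s-balls with centers in the big ball
  obtain ⟨t, ht⟩ := (hcb x r).elim_finite_subcover (fun y : X => closedBall y s)
    (fun y => ultra_ball_isOpen hd hs)
    (fun z hz => Set.mem_iUnion.mpr ⟨z, mem_closedBall_self hs.le⟩)
  set T : Finset X := t.filter (fun y => y ∈ closedBall x r) with hT
  have hcov : closedBall x r = ⋃ y ∈ T, closedBall y s := by
    apply Set.Subset.antisymm
    · intro z hz
      obtain ⟨i, hi, hzi⟩ := Set.mem_iUnion₂.mp (ht hz)
      have hix : i ∈ closedBall x r := by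
        rw [mem_closedBall, dist_comm]
        exact (hd x z i).trans (max_le (mem_closedBall'.mp hz)
          ((mem_closedBall.mp hzi).trans hsr))
      exact Set.mem_iUnion₂.mpr ⟨i, Finset.mem_filter.mpr ⟨hi, hix⟩, hzi⟩
    · refine Set.iUnion₂_subset fun y hy => ?_
      exact ultra_ball_subset hd hsr (mem_closedBall.mp (Finset.mem_filter.mp hy).2)
  -- reduce duplicates: use the image in `Finset (Set X)`
  set S : Finset (Set X) := T.image (fun y => closedBall y s) with hS
  have hcov' : closedBall x r = ⋃ B ∈ S, B := by
    rw [hcov]; simp [hS, Set.iUnion_comm]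
  have hmeas : ∀ B ∈ S, MeasurableSet B := by
    intro B hB
    obtain ⟨y, _, rfl⟩ := Finset.mem_image.mp hB
    exact measurableSet_closedBall
  have hdisj : Set.Pairwise (↑S : Set (Set X)) (Function.onFun Disjoint (id : Set X → Set X)) := by
    intro B hB B' hB' hne
    obtain ⟨a, _, rfl⟩ := Finset.mem_image.mp hB
    obtain ⟨b, _, rfl⟩ := Finset.mem_image.mp hB'
    by_cases hab : dist a b ≤ s
    · exact absurd (ultra_ball_eq hd hab) hne
    · exact ultra_ball_disj hd hab
  have hMavg : ∀ y, |avgOp μ s f y| ≤ M := avg_bound hμpos hμfin hf hfb hs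
  have havgm : Measurable (avgOp μ s f) := (avg_continuous hd μ f hs).measurable
  have hintf : ∀ B ∈ S, IntegrableOn f B μ := by
    intro B hB
    obtain ⟨y, _, rfl⟩ := Finset.mem_image.mp hB
    exact integrableOn_of_bound hf hfb (hμfin y s hs)
  have hintavg : ∀ B ∈ S, IntegrableOn (avgOp μ s f) B μ := by
    intro B hB
    obtain ⟨y, _, rfl⟩ := Finset.mem_image.mp hB
    exact integrableOn_of_bound havgm hMavg (hμfin y s hs)
  rw [hcov', integral_biUnion_finset S hmeas hdisj hintavg,
    integral_biUnion_finset S hmeas hdisj hintf]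
  refine Finset.sum_congr rfl fun B hB => ?_
  obtain ⟨y, _, rfl⟩ := Finset.mem_image.mp hB
  exact integral_avg_ball hd hμpos hμfin hs f y

end Ultra

theorem statement_0
    {X : Type*} [MetricSpace X] [TopologicalSpace.SeparableSpace X]
    [MeasurableSpace X] [BorelSpace X]
    (hd : ∀ x y z : X, dist x z ≤ max (dist x y) (dist y z))
    (hcb : ∀ (x : X) (r : ℝ), IsCompact (closedBall x r))
    (μ : Measure X)
    (hμpos : ∀ (x : X) (r : ℝ), 0 < r → 0 < μ (closedBall x r))
    (hμfin : ∀ (x : X) (r : ℝ), 0 < r → μ (closedBall x r) < ⊤)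
    (f : X → ℝ) (hf : Measurable f) (hfb : ∃ M : ℝ, ∀ x : X, |f x| ≤ M)
    (r s : ℝ) (hr : 0 < r) (hs : 0 < s) (x : X) :
    avgOp μ r (avgOp μ s f) x = avgOp μ (max r s) f x ∧
    avgOp μ s (avgOp μ r f) x = avgOp μ (max r s) f x ∧
    avgOp μ r (avgOp μ r f) x = avgOp μ r f x := by
  obtain ⟨M, hfbM⟩ := hfb
  have comp : ∀ a b : ℝ, 0 < a → 0 < b →
      avgOp μ a (avgOp μ b f) x = avgOp μ (max a b) f x := by
    intro a b ha hb
    rcases le_total a b with hab | hba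
    · rw [max_eq_right hab]
      exact avg_comp_le hd hμpos hμfin ha hab f x
    · rw [max_eq_left hba]
      exact avg_comp_ge hd hcb hμpos hμfin hb hba hf hfbM x
  refine ⟨comp r s hr hs, ?_, ?_⟩
  · rw [max_comm]; exact comp s r hs hr
  · have h := comp r r hr hr; rwa [max_self] at h
end

section
/- For every t > 0, every bounded Borel function f : X → ℝ and every x ∈ X, P^t f(x) = ∫_X p(t,x,y) f(y) dμ(y), where p(t,x,y) = ∫_{[d(x,y),∞)} μ(B_r(x))^{-1} dσ^t(r) is the heat kernel. -/
open MeasureTheory Metric Filter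
open scoped ENNReal Classical

theorem statement_2
    {X : Type*} [MetricSpace X] [TopologicalSpace.SeparableSpace X]
    [MeasurableSpace X] [BorelSpace X]
    (hd : ∀ x y z : X, dist x z ≤ max (dist x y) (dist y z))
    (hcb : ∀ (x : X) (r : ℝ), IsCompact (closedBall x r))
    (μ : Measure X)
    (hμpos : ∀ (x : X) (r : ℝ), 0 < r → 0 < μ (closedBall x r))
    (hμfin : ∀ (x : X) (r : ℝ), 0 < r → μ (closedBall x r) < ⊤)
    (σ : ℝ → ℝ)
    (hσmono : StrictMonoOn σ (Set.Ici 0))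
    (hσrange : ∀ r : ℝ, 0 ≤ r → σ r ∈ Set.Icc (0:ℝ) 1)
    (hσlc : ∀ r : ℝ, 0 < r → ContinuousWithinAt σ (Set.Iic r) r)
    (hσzero : Tendsto σ (nhdsWithin 0 (Set.Ioi 0)) (nhds 0))
    (hσtop : Tendsto σ atTop (nhds 1))
    (ν : ℝ → Measure ℝ)
    (hν : ∀ t : ℝ, 0 < t → ∀ a b : ℝ, 0 ≤ a → a ≤ b →
      ν t (Set.Ico a b) = ENNReal.ofReal (σ b ^ t - σ a ^ t))
    (hνneg : ∀ t : ℝ, 0 < t → ν t (Set.Iio 0) = 0)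
    (f : X → ℝ) (hf : Measurable f) (hfb : ∃ M : ℝ, ∀ x : X, |f x| ≤ M)
    (t : ℝ) (ht : 0 < t) (x : X) :
    isoOp μ (ν t) f x = ∫ y, (heatK μ ν t x y).toReal * f y ∂μ := by
  haveI : SecondCountableTopology X := UniformSpace.secondCountable_of_separable X
  obtain ⟨M, hM⟩ := hfb
  have hM0 : 0 ≤ M := le_trans (abs_nonneg _) (hM x)
  set A : ℝ → ℝ≥0∞ := fun r => μ (closedBall x r) with hAdef
  have hAmono : Monotone A := fun r s hrs => measure_mono (closedBall_subset_closedBall hrs)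
  have hAmeas : Measurable A := hAmono.measurable
  have hAfin : ∀ r, A r < ⊤ := by
    intro r
    refine lt_of_le_of_lt (hAmono (le_trans (le_abs_self r) ?_)) (hμfin x (|r| + 1) (by positivity))
    linarith [abs_nonneg r]
  haveI : SigmaFinite μ := by
    refine ⟨⟨⟨fun n => closedBall x n, fun _ => trivial, fun n => hAfin n, ?_⟩⟩⟩
    ext y
    simp only [Set.mem_iUnion, Set.mem_univ, iff_true]
    obtain ⟨n, hn⟩ := exists_nat_ge (dist y x)
    exact ⟨n, mem_closedBall.2 hn⟩
  set ν' : Measure ℝ := (ν t).restrict (Set.Ici 0) with hν'def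
  have hν'le : ν' Set.univ ≤ 1 := by
    rw [Measure.restrict_apply_univ]
    have hU : Set.Ici (0:ℝ) = ⋃ n : ℕ, Set.Ico (0:ℝ) n := by
      ext r
      simp only [Set.mem_Ici, Set.mem_iUnion, Set.mem_Ico]
      constructor
      · intro hr; obtain ⟨n, hn⟩ := exists_nat_gt r; exact ⟨n, hr, hn⟩
      · rintro ⟨n, hr, _⟩; exact hr
    rw [hU, Monotone.measure_iUnion
      (fun a b hab => Set.Ico_subset_Ico_right (Nat.cast_le.2 hab))]
    refine iSup_le fun n => ?_
    rw [hν t ht 0 n le_rfl (Nat.cast_nonneg n)]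
    refine ENNReal.ofReal_le_one.2 ?_
    have h1 : σ n ^ t ≤ 1 :=
      Real.rpow_le_one (hσrange n (Nat.cast_nonneg n)).1 (hσrange n (Nat.cast_nonneg n)).2 ht.le
    have h2 : 0 ≤ σ 0 ^ t := Real.rpow_nonneg (hσrange 0 le_rfl).1 t
    linarith
  haveI : IsFiniteMeasure ν' := ⟨lt_of_le_of_lt hν'le ENNReal.one_lt_top⟩
  set G : X → ℝ≥0∞ := fun y => heatK μ ν t x y with hGdef
  have hGmeas : Measurable G := by
    have hJ : Antitone (fun s : ℝ => ∫⁻ r in Set.Ici s, (A r)⁻¹ ∂(ν t)) := by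
      intro s s' hss'
      exact lintegral_mono' (Measure.restrict_mono (Set.Ici_subset_Ici.2 hss') le_rfl) le_rfl
    exact hJ.measurable.comp (measurable_const.dist measurable_id)
  have key : ∀ g : X → ℝ, Measurable g → (∀ y, 0 ≤ g y) → (∀ y, g y ≤ M) →
      (∫ r in Set.Ici (0:ℝ), avgOp μ r g x ∂(ν t) = ∫ y, (G y).toReal * g y ∂μ) ∧
      Integrable (fun y => (G y).toReal * g y) μ ∧
      Integrable (fun r => avgOp μ r g x) ν' := by
    intro g hg hg0 hgM
    set φ : X → ℝ≥0∞ := fun y => ENNReal.ofReal (g y) with hφdef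
    have hφmeas : Measurable φ := ENNReal.measurable_ofReal.comp hg
    have hφle : ∀ y, φ y ≤ ENNReal.ofReal M := fun y => ENNReal.ofReal_le_ofReal (hgM y)
    set L : ℝ → ℝ≥0∞ := fun r => ∫⁻ y in closedBall x r, φ y ∂μ with hLdef
    set Φ : ℝ → ℝ≥0∞ := fun r => (A r)⁻¹ * L r with hΦdef
    have hLle : ∀ r, L r ≤ ENNReal.ofReal M * A r := by
      intro r
      calc L r ≤ ∫⁻ _ in closedBall x r, ENNReal.ofReal M ∂μ := lintegral_mono fun y => hφle y
        _ = ENNReal.ofReal M * A r := setLIntegral_const _ _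
    have hΦle : ∀ r, Φ r ≤ ENNReal.ofReal M := by
      intro r
      rcases eq_or_ne (A r) 0 with h0 | h0
      · have hL0 : L r = 0 := le_antisymm (by simpa [h0] using hLle r) zero_le
        simp [hΦdef, hL0]
      · calc Φ r ≤ (A r)⁻¹ * (ENNReal.ofReal M * A r) := mul_le_mul_right (hLle r) _
          _ = ENNReal.ofReal M * ((A r)⁻¹ * A r) := by ring
          _ = ENNReal.ofReal M := by rw [ENNReal.inv_mul_cancel h0 (hAfin r).ne, mul_one]
    have hΦlt : ∀ r, Φ r < ⊤ := fun r => lt_of_le_of_lt (hΦle r) ENNReal.ofReal_lt_top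
    have hLmeas : Measurable L := by
      have hset : MeasurableSet {p : ℝ × X | dist p.2 x ≤ p.1} :=
        measurableSet_le (measurable_snd.dist measurable_const) measurable_fst
      have hme : Measurable fun p : ℝ × X =>
          ({p : ℝ × X | dist p.2 x ≤ p.1}).indicator (fun q => φ q.2) p :=
        (hφmeas.comp measurable_snd).indicator hset
      have h2 : Measurable fun r : ℝ => ∫⁻ y, ({p : ℝ × X | dist p.2 x ≤ p.1}).indicator (fun q => φ q.2) (r, y) ∂μ :=
        hme.lintegral_prod_right'
      have hfeq : L = fun r : ℝ =>
          ∫⁻ y, ({p : ℝ × X | dist p.2 x ≤ p.1}).indicator (fun q => φ q.2) (r, y) ∂μ := by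
        funext r
        show (∫⁻ y in closedBall x r, φ y ∂μ) = _
        rw [← lintegral_indicator measurableSet_closedBall]
        refine lintegral_congr fun y => ?_
        simp only [Set.indicator_apply, Set.mem_setOf_eq, mem_closedBall]
      rw [hfeq]
      exact h2
    have hΦmeas : Measurable Φ := hAmeas.inv.mul hLmeas
    have havg : ∀ r, avgOp μ r g x = (Φ r).toReal := by
      intro r
      rcases eq_or_ne (A r) 0 with h0 | h0
      · have hL0 : L r = 0 := le_antisymm (by simpa [h0] using hLle r) zero_le
        have hμ0 : μ.restrict (closedBall x r) = 0 :=
          Measure.restrict_eq_zero.2 (show μ (closedBall x r) = 0 from h0)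
        simp [avgOp, hΦdef, hL0, show μ (closedBall x r) = 0 from h0, hμ0]
      · have hint : ∫ y in closedBall x r, g y ∂μ = (L r).toReal := by
          rw [integral_eq_lintegral_of_nonneg_ae (Filter.Eventually.of_forall fun y => hg0 y)
            hg.aestronglyMeasurable.restrict]
        rw [avgOp, hint, hΦdef, ENNReal.toReal_mul, ENNReal.toReal_inv]
    set S : Set (ℝ × X) := {p : ℝ × X | dist p.2 x ≤ p.1} with hSdef
    have hSmeas : MeasurableSet S :=
      measurableSet_le (measurable_snd.dist measurable_const) measurable_fst
    set k : ℝ × X → ℝ≥0∞ := fun p => S.indicator (fun q => (A q.1)⁻¹ * φ q.2) p with hkdef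
    have hkmeas : Measurable k :=
      (((hAmeas.comp measurable_fst).inv).mul (hφmeas.comp measurable_snd)).indicator hSmeas
    have hswap : ∫⁻ r, Φ r ∂ν' = ∫⁻ y, G y * φ y ∂μ := by
      have h1 : ∀ r, Φ r = ∫⁻ y, k (r, y) ∂μ := by
        intro r
        have hk : ∀ y, k (r, y) = (A r)⁻¹ * (closedBall x r).indicator φ y := by
          intro y
          by_cases hy : dist y x ≤ r
          · rw [show k (r, y) = (A r)⁻¹ * φ y from
              Set.indicator_of_mem (show (r, y) ∈ S from hy) _,
              Set.indicator_of_mem (mem_closedBall.2 hy)]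
          · rw [show k (r, y) = 0 from
              Set.indicator_of_notMem (show (r, y) ∉ S from hy) _,
              Set.indicator_of_notMem (fun h => hy (mem_closedBall.1 h)), mul_zero]
        simp only [hk]
        rw [lintegral_const_mul _ (hφmeas.indicator measurableSet_closedBall),
          lintegral_indicator measurableSet_closedBall]
      have h2 : ∀ y, ∫⁻ r, k (r, y) ∂ν' = G y * φ y := by
        intro y
        have hky : ∀ r, k (r, y) = (Set.Ici (dist x y)).indicator (fun r => (A r)⁻¹ * φ y) r := by
          intro r
          by_cases hr : dist x y ≤ r
          · rw [show k (r, y) = (A r)⁻¹ * φ y from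
              Set.indicator_of_mem (show (r, y) ∈ S from by
                simp only [hSdef, Set.mem_setOf_eq]; rwa [dist_comm]) _,
              Set.indicator_of_mem (Set.mem_Ici.mpr hr)]
          · rw [show k (r, y) = 0 from
              Set.indicator_of_notMem (show (r, y) ∉ S from fun hmem => hr (by
                have : dist y x ≤ r := hmem
                rwa [dist_comm] at this)) _,
              Set.indicator_of_notMem (fun h => hr (Set.mem_Ici.mp h))]
        simp only [hky]
        rw [lintegral_indicator measurableSet_Ici, lintegral_mul_const (f := fun r => (A r)⁻¹) _ hAmeas.inv]
        congr 1
        show ∫⁻ r in Set.Ici (dist x y), (A r)⁻¹ ∂ν' = ∫⁻ r in Set.Ici (dist x y), (A r)⁻¹ ∂(ν t)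
        rw [hν'def, Measure.restrict_restrict measurableSet_Ici,
          Set.inter_eq_self_of_subset_left (Set.Ici_subset_Ici.2 dist_nonneg)]
      calc ∫⁻ r, Φ r ∂ν' = ∫⁻ r, ∫⁻ y, k (r, y) ∂μ ∂ν' := lintegral_congr h1
        _ = ∫⁻ y, ∫⁻ r, k (r, y) ∂ν' ∂μ := lintegral_lintegral_swap hkmeas.aemeasurable
        _ = ∫⁻ y, G y * φ y ∂μ := lintegral_congr h2
    have hfin : ∫⁻ r, Φ r ∂ν' ≠ ⊤ := by
      refine ne_of_lt (lt_of_le_of_lt (lintegral_mono fun r => hΦle r) ?_)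
      rw [lintegral_const]
      exact ENNReal.mul_lt_top ENNReal.ofReal_lt_top (measure_lt_top ν' Set.univ)
    have hGφmeas : Measurable fun y => G y * φ y := hGmeas.mul hφmeas
    have hfin' : ∫⁻ y, G y * φ y ∂μ ≠ ⊤ := by rw [← hswap]; exact hfin
    have hstep5 : ∫ r in Set.Ici (0:ℝ), avgOp μ r g x ∂(ν t) = (∫⁻ r, Φ r ∂ν').toReal := by
      rw [← hν'def]
      calc ∫ r, avgOp μ r g x ∂ν' = ∫ r, (Φ r).toReal ∂ν' :=
            integral_congr_ae (Filter.Eventually.of_forall havg)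
        _ = (∫⁻ r, Φ r ∂ν').toReal :=
            integral_toReal hΦmeas.aemeasurable (Filter.Eventually.of_forall hΦlt)
    have hrhs : ∫ y, (G y).toReal * g y ∂μ = (∫⁻ y, G y * φ y ∂μ).toReal := by
      rw [← integral_toReal hGφmeas.aemeasurable (ae_lt_top hGφmeas hfin')]
      refine integral_congr_ae (Filter.Eventually.of_forall fun y => ?_)
      simp only [hφdef, ENNReal.toReal_mul, ENNReal.toReal_ofReal (hg0 y)]
    refine ⟨by rw [hstep5, hswap, hrhs], ?_, ?_⟩
    · refine (integrable_toReal_of_lintegral_ne_top hGφmeas.aemeasurable hfin').congr ?_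
      refine Filter.Eventually.of_forall fun y => ?_
      simp only [hφdef, ENNReal.toReal_mul, ENNReal.toReal_ofReal (hg0 y)]
    · have hfn : (fun r => avgOp μ r g x) = fun r => (Φ r).toReal := funext havg
      rw [hfn]
      refine Integrable.mono' (integrable_const M) hΦmeas.ennreal_toReal.aestronglyMeasurable ?_
      refine Filter.Eventually.of_forall fun r => ?_
      rw [Real.norm_eq_abs, abs_of_nonneg ENNReal.toReal_nonneg]
      calc (Φ r).toReal ≤ (ENNReal.ofReal M).toReal :=
            ENNReal.toReal_mono ENNReal.ofReal_ne_top (hΦle r)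
        _ = M := ENNReal.toReal_ofReal hM0
  set g₁ : X → ℝ := fun y => max (f y) 0 with hg₁def
  set g₂ : X → ℝ := fun y => max (-f y) 0 with hg₂def
  have hfg : ∀ y, f y = g₁ y - g₂ y := fun y => (max_zero_sub_max_neg_zero_eq_self (f y)).symm
  have hg₁M : ∀ y, g₁ y ≤ M := fun y => max_le ((le_abs_self _).trans (hM y)) hM0
  have hg₂M : ∀ y, g₂ y ≤ M := fun y => max_le ((neg_le_abs _).trans (hM y)) hM0
  obtain ⟨heq₁, hint₁, hintr₁⟩ := key g₁ (hf.max measurable_const) (fun y => le_max_right _ _) hg₁M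
  obtain ⟨heq₂, hint₂, hintr₂⟩ := key g₂ (hf.neg.max measurable_const) (fun y => le_max_right _ _) hg₂M
  have havgsub : ∀ r, avgOp μ r f x = avgOp μ r g₁ x - avgOp μ r g₂ x := by
    intro r
    have hib : ∀ (h : X → ℝ), Measurable h → (∀ y, |h y| ≤ M) →
        IntegrableOn h (closedBall x r) μ := by
      intro h hh hhM
      refine Integrable.mono' (integrableOn_const (C := M) (hAfin r).ne)
        hh.aestronglyMeasurable.restrict ?_
      exact Filter.Eventually.of_forall fun y => by rw [Real.norm_eq_abs]; exact hhM y
    have h1 := hib g₁ (hf.max measurable_const)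
      (fun y => by rw [abs_of_nonneg (le_max_right _ _)]; exact hg₁M y)
    have h2 := hib g₂ (hf.neg.max measurable_const)
      (fun y => by rw [abs_of_nonneg (le_max_right _ _)]; exact hg₂M y)
    simp only [avgOp]
    rw [← mul_sub, ← integral_sub h1 h2]
    congr 1
    exact integral_congr_ae (Filter.Eventually.of_forall fun y => hfg y)
  calc isoOp μ (ν t) f x
      = ∫ r in Set.Ici (0:ℝ), (avgOp μ r g₁ x - avgOp μ r g₂ x) ∂(ν t) := by
        simp only [isoOp]
        exact integral_congr_ae (Filter.Eventually.of_forall fun r => havgsub r)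
    _ = (∫ r in Set.Ici (0:ℝ), avgOp μ r g₁ x ∂(ν t)) -
        ∫ r in Set.Ici (0:ℝ), avgOp μ r g₂ x ∂(ν t) := integral_sub hintr₁ hintr₂
    _ = (∫ y, (G y).toReal * g₁ y ∂μ) - ∫ y, (G y).toReal * g₂ y ∂μ := by rw [heq₁, heq₂]
    _ = ∫ y, ((G y).toReal * g₁ y - (G y).toReal * g₂ y) ∂μ := (integral_sub hint₁ hint₂).symm
    _ = ∫ y, (heatK μ ν t x y).toReal * f y ∂μ := by
        refine integral_congr_ae (Filter.Eventually.of_forall fun y => ?_)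
        show (G y).toReal * g₁ y - (G y).toReal * g₂ y = (G y).toReal * f y
        rw [hfg y, mul_sub]
end

section
/- For every t > 0 and all x, y ∈ X (with the convention t/d_*(x,y) = ∞ and 1/d_*(x,y) = ∞ when x = y), the heat kernel satisfies p(t,x,y) = ∫_0^{t/d_*(x,y)} N(x, s/t) e^{−s} ds and p(t,x,y) = t ∫_0^{1/d_*(x,y)} N(x,τ) e^{−τt} dτ. -/
open MeasureTheory Metric Filter
open scoped ENNReal Classical

/-- Scaling change of variables for lintegrals. -/
lemma scale_lintegral_aux {t : ℝ} (ht : 0 < t) (f : ℝ → ℝ≥0∞) (hf : Measurable f)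
    (A : Set ℝ) (hA : MeasurableSet A) :
    ∫⁻ s in A, f s =
      ENNReal.ofReal t * ∫⁻ τ in (fun τ : ℝ => t * τ) ⁻¹' A, f (t * τ) := by
  have hg : Measurable (fun τ : ℝ => t * τ) := measurable_const_mul t
  have h1 : Measure.map (fun τ : ℝ => t * τ) (volume.restrict ((fun τ : ℝ => t * τ) ⁻¹' A))
      = ENNReal.ofReal t⁻¹ • volume.restrict A := by
    rw [← Measure.restrict_map hg hA, Real.map_volume_mul_left ht.ne',
      Measure.restrict_smul, abs_of_pos (inv_pos.mpr ht)]
  have h2 : ∫⁻ τ in (fun τ : ℝ => t * τ) ⁻¹' A, f (t * τ) ∂volume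
      = ENNReal.ofReal t⁻¹ * ∫⁻ s in A, f s := by
    rw [← lintegral_map hf hg, h1, lintegral_smul_measure, smul_eq_mul]
  rw [h2, ← mul_assoc, ← ENNReal.ofReal_mul ht.le, mul_inv_cancel₀ ht.ne', ENNReal.ofReal_one,
    one_mul]

lemma lint_exp_Ioc {u v : ℝ} (h : u ≤ v) :
    ∫⁻ s in Set.Ioc u v, ENNReal.ofReal (Real.exp (-s)) ∂volume
      = ENNReal.ofReal (Real.exp (-u) - Real.exp (-v)) := by
  rw [← ofReal_integral_eq_lintegral_ofReal]
  · congr 1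
    rw [← intervalIntegral.integral_of_le h,
      intervalIntegral.integral_comp_neg (fun x => Real.exp x), integral_exp]
  · exact (Real.continuous_exp.comp continuous_neg).integrableOn_Ioc
  · exact Eventually.of_forall fun x => (Real.exp_pos _).le

lemma lint_exp_Ioi (u : ℝ) :
    ∫⁻ s in Set.Ioi u, ENNReal.ofReal (Real.exp (-s)) ∂volume
      = ENNReal.ofReal (Real.exp (-u)) := by
  have hint : IntegrableOn (fun x => Real.exp (-x)) (Set.Ioi u) := by
    have := exp_neg_integrableOn_Ioi u (zero_lt_one)
    simpa using this
  rw [← ofReal_integral_eq_lintegral_ofReal hint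
    (Eventually.of_forall fun x => (Real.exp_pos _).le), integral_exp_neg_Ioi]

noncomputable def rhoAux (σ : ℝ → ℝ) (t : ℝ) (s : ℝ) : ℝ :=
  sSup {r : ℝ | 0 ≤ r ∧ σ r ≤ Real.exp (-(s/t))}

section Rho
variable {σ : ℝ → ℝ} {t : ℝ}

lemma sigma_zero (hσmono : StrictMonoOn σ (Set.Ici 0))
    (hσrange : ∀ r : ℝ, 0 ≤ r → σ r ∈ Set.Icc (0:ℝ) 1)
    (hσzero : Tendsto σ (nhdsWithin 0 (Set.Ioi 0)) (nhds 0)) : σ 0 = 0 := by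
  have h1 : ∀ᶠ r in nhdsWithin (0:ℝ) (Set.Ioi 0), σ 0 ≤ σ r := by
    filter_upwards [self_mem_nhdsWithin] with r hr
    exact (hσmono Set.self_mem_Ici (Set.mem_Ici.mpr (le_of_lt (Set.mem_Ioi.mp hr))) hr).le
  exact le_antisymm (ge_of_tendsto hσzero h1) (hσrange 0 le_rfl).1

lemma sigma_lt_one (hσmono : StrictMonoOn σ (Set.Ici 0))
    (hσrange : ∀ r : ℝ, 0 ≤ r → σ r ∈ Set.Icc (0:ℝ) 1) {r : ℝ} (hr : 0 ≤ r) : σ r < 1 :=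
  lt_of_lt_of_le (hσmono hr (by simp only [Set.mem_Ici]; linarith) (by linarith))
    (hσrange (r+1) (by linarith)).2

lemma sigma_pos (hσmono : StrictMonoOn σ (Set.Ici 0))
    (hσrange : ∀ r : ℝ, 0 ≤ r → σ r ∈ Set.Icc (0:ℝ) 1)
    (hσzero : Tendsto σ (nhdsWithin 0 (Set.Ioi 0)) (nhds 0)) {r : ℝ} (hr : 0 < r) :
    0 < σ r := by
  have := hσmono (Set.self_mem_Ici) (Set.mem_Ici.mpr (le_of_lt hr)) hr
  rwa [sigma_zero hσmono hσrange hσzero] at this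

lemma rho_nonneg (hσmono : StrictMonoOn σ (Set.Ici 0))
    (s : ℝ) : 0 ≤ rhoAux σ t s :=
  Real.sSup_nonneg (fun _ hx => hx.1)

lemma rho_mem_zero (hσmono : StrictMonoOn σ (Set.Ici 0))
    (hσrange : ∀ r : ℝ, 0 ≤ r → σ r ∈ Set.Icc (0:ℝ) 1)
    (hσzero : Tendsto σ (nhdsWithin 0 (Set.Ioi 0)) (nhds 0)) (s : ℝ) :
    (0:ℝ) ∈ {r : ℝ | 0 ≤ r ∧ σ r ≤ Real.exp (-(s/t))} :=
  ⟨le_rfl, by rw [sigma_zero hσmono hσrange hσzero]; exact (Real.exp_pos _).le⟩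

lemma rho_bddAbove (ht : 0 < t) (hσmono : StrictMonoOn σ (Set.Ici 0))
    (hσrange : ∀ r : ℝ, 0 ≤ r → σ r ∈ Set.Icc (0:ℝ) 1)
    (hσtop : Tendsto σ atTop (nhds 1)) {s : ℝ} (hs : 0 < s) :
    BddAbove {r : ℝ | 0 ≤ r ∧ σ r ≤ Real.exp (-(s/t))} := by
  have hc1 : Real.exp (-(s/t)) < 1 := by
    rw [Real.exp_lt_one_iff]
    have : 0 < s / t := div_pos hs ht
    linarith
  obtain ⟨M, hM0, hM⟩ : ∃ M : ℝ, 0 ≤ M ∧ Real.exp (-(s/t)) < σ M := by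
    have h1 : ∀ᶠ r in atTop, Real.exp (-(s/t)) < σ r := hσtop.eventually (eventually_gt_nhds hc1)
    have h2 : ∀ᶠ r : ℝ in atTop, (0:ℝ) ≤ r := eventually_ge_atTop 0
    obtain ⟨M, hM2, hM1⟩ := (h2.and h1).exists
    exact ⟨M, hM2, hM1⟩
  refine ⟨M, fun r hr => ?_⟩
  by_contra hcon
  push_neg at hcon
  exact absurd (hr.2.trans_lt hM) (not_lt.mpr ((hσmono hM0 (hM0.trans hcon.le) hcon).le))

lemma sigma_rho_le (ht : 0 < t) (hσmono : StrictMonoOn σ (Set.Ici 0))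
    (hσrange : ∀ r : ℝ, 0 ≤ r → σ r ∈ Set.Icc (0:ℝ) 1)
    (hσlc : ∀ r : ℝ, 0 < r → ContinuousWithinAt σ (Set.Iic r) r)
    (hσzero : Tendsto σ (nhdsWithin 0 (Set.Ioi 0)) (nhds 0))
    (hσtop : Tendsto σ atTop (nhds 1)) {s : ℝ} (hs : 0 < s) :
    σ (rhoAux σ t s) ≤ Real.exp (-(s/t)) := by
  rcases eq_or_lt_of_le (rho_nonneg (t := t) hσmono s) with h0 | hpos
  · rw [← h0, sigma_zero hσmono hσrange hσzero]
    exact (Real.exp_pos _).le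
  · have hlc : Tendsto σ (nhdsWithin (rhoAux σ t s) (Set.Iio (rhoAux σ t s)))
        (nhds (σ (rhoAux σ t s))) :=
      (hσlc _ hpos).tendsto.mono_left (nhdsWithin_mono _ Set.Iio_subset_Iic_self)
    refine le_of_tendsto hlc ?_
    have hev : ∀ᶠ r in nhdsWithin (rhoAux σ t s) (Set.Iio (rhoAux σ t s)), 0 < r :=
      eventually_nhdsWithin_of_eventually_nhds (eventually_gt_nhds hpos)
    filter_upwards [self_mem_nhdsWithin, hev] with r hr hr0
    obtain ⟨r', hr'mem, hrr'⟩ := exists_lt_of_lt_csSup ⟨0, rho_mem_zero hσmono hσrange hσzero s⟩ hr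
    exact le_trans (hσmono hr0.le (hr0.le.trans hrr'.le) hrr').le hr'mem.2

lemma le_rho_iff (ht : 0 < t) (hσmono : StrictMonoOn σ (Set.Ici 0))
    (hσrange : ∀ r : ℝ, 0 ≤ r → σ r ∈ Set.Icc (0:ℝ) 1)
    (hσlc : ∀ r : ℝ, 0 < r → ContinuousWithinAt σ (Set.Iic r) r)
    (hσzero : Tendsto σ (nhdsWithin 0 (Set.Ioi 0)) (nhds 0))
    (hσtop : Tendsto σ atTop (nhds 1)) {s : ℝ} (hs : 0 < s) {a : ℝ} (ha : 0 ≤ a) :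
    a ≤ rhoAux σ t s ↔ σ a ≤ Real.exp (-(s/t)) := by
  constructor
  · intro h
    exact le_trans (hσmono.monotoneOn ha (ha.trans h) h)
      (sigma_rho_le ht hσmono hσrange hσlc hσzero hσtop hs)
  · intro h
    exact le_csSup (rho_bddAbove ht hσmono hσrange hσtop hs) ⟨ha, h⟩

lemma rho_eq_zero_of_nonpos (ht : 0 < t)
    (hσrange : ∀ r : ℝ, 0 ≤ r → σ r ∈ Set.Icc (0:ℝ) 1) {s : ℝ} (hs : s ≤ 0) :
    rhoAux σ t s = 0 := by
  have hsub : Set.Ici (0:ℝ) ⊆ {r : ℝ | 0 ≤ r ∧ σ r ≤ Real.exp (-(s/t))} := by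
    intro r hr
    refine ⟨hr, le_trans (hσrange r hr).2 ?_⟩
    rw [← Real.exp_zero]
    apply Real.exp_le_exp.mpr
    have : s / t ≤ 0 := div_nonpos_of_nonpos_of_nonneg hs ht.le
    linarith
  exact Real.sSup_of_not_bddAbove (fun h => not_bddAbove_Ici (0:ℝ) (h.mono hsub))

lemma sigma_le_exp_iff (ht : 0 < t) {a s : ℝ} (ha : 0 < σ a) :
    σ a ≤ Real.exp (-(s/t)) ↔ s ≤ t * (-Real.log (σ a)) := by
  rw [← Real.log_le_iff_le_exp ha]
  constructor
  · intro h
    have : s / t ≤ -Real.log (σ a) := by linarith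
    calc s = t * (s / t) := by field_simp
    _ ≤ t * (-Real.log (σ a)) := by nlinarith
  · intro h
    have : s / t ≤ -Real.log (σ a) := by
      rw [div_le_iff₀ ht]; linarith [h]; 
    linarith

lemma rho_preimage_Ici (ht : 0 < t) (hσmono : StrictMonoOn σ (Set.Ici 0))
    (hσrange : ∀ r : ℝ, 0 ≤ r → σ r ∈ Set.Icc (0:ℝ) 1)
    (hσlc : ∀ r : ℝ, 0 < r → ContinuousWithinAt σ (Set.Iic r) r)
    (hσzero : Tendsto σ (nhdsWithin 0 (Set.Ioi 0)) (nhds 0))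
    (hσtop : Tendsto σ atTop (nhds 1)) {a : ℝ} (ha : 0 < a) :
    rhoAux σ t ⁻¹' Set.Ici a = Set.Ioc 0 (t * (-Real.log (σ a))) := by
  have hσa : 0 < σ a := sigma_pos hσmono hσrange hσzero ha
  ext s
  simp only [Set.mem_preimage, Set.mem_Ici, Set.mem_Ioc]
  constructor
  · intro h
    rcases le_or_gt s 0 with hs | hs
    · exfalso
      rw [rho_eq_zero_of_nonpos ht hσrange hs] at h
      linarith
    · exact ⟨hs, (sigma_le_exp_iff ht hσa).mp
        ((le_rho_iff ht hσmono hσrange hσlc hσzero hσtop hs ha.le).mp h)⟩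
  · rintro ⟨hs, hsle⟩
    exact (le_rho_iff ht hσmono hσrange hσlc hσzero hσtop hs ha.le).mpr
      ((sigma_le_exp_iff ht hσa).mpr hsle)

lemma rho_measurable (ht : 0 < t) (hσmono : StrictMonoOn σ (Set.Ici 0))
    (hσrange : ∀ r : ℝ, 0 ≤ r → σ r ∈ Set.Icc (0:ℝ) 1)
    (hσlc : ∀ r : ℝ, 0 < r → ContinuousWithinAt σ (Set.Iic r) r)
    (hσzero : Tendsto σ (nhdsWithin 0 (Set.Ioi 0)) (nhds 0))
    (hσtop : Tendsto σ atTop (nhds 1)) :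
    Measurable (rhoAux σ t) := by
  apply measurable_of_Ici
  intro a
  rcases le_or_gt a 0 with ha | ha
  · have : rhoAux σ t ⁻¹' Set.Ici a = Set.univ := by
      ext s
      simp only [Set.mem_preimage, Set.mem_Ici, Set.mem_univ, iff_true]
      exact ha.trans (rho_nonneg hσmono s)
    rw [this]; exact MeasurableSet.univ
  · rw [rho_preimage_Ici ht hσmono hσrange hσlc hσzero hσtop ha]
    exact measurableSet_Ioc

lemma nu_eq_map (ht : 0 < t) (hσmono : StrictMonoOn σ (Set.Ici 0))
    (hσrange : ∀ r : ℝ, 0 ≤ r → σ r ∈ Set.Icc (0:ℝ) 1)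
    (hσlc : ∀ r : ℝ, 0 < r → ContinuousWithinAt σ (Set.Iic r) r)
    (hσzero : Tendsto σ (nhdsWithin 0 (Set.Ioi 0)) (nhds 0))
    (hσtop : Tendsto σ atTop (nhds 1))
    (ν : ℝ → Measure ℝ)
    (hν : ∀ t : ℝ, 0 < t → ∀ a b : ℝ, 0 ≤ a → a ≤ b →
      ν t (Set.Ico a b) = ENNReal.ofReal (σ b ^ t - σ a ^ t))
    (hνneg : ∀ t : ℝ, 0 < t → ν t (Set.Iio 0) = 0) :
    ν t = Measure.map (rhoAux σ t)
      ((volume.restrict (Set.Ioi 0)).withDensity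
        (fun s => ENNReal.ofReal (Real.exp (-s)))) := by
  set W : Measure ℝ := Measure.map (rhoAux σ t)
      ((volume.restrict (Set.Ioi 0)).withDensity
        (fun s => ENNReal.ofReal (Real.exp (-s)))) with hWdef
  have hρm : Measurable (rhoAux σ t) := rho_measurable ht hσmono hσrange hσlc hσzero hσtop
  have hWapply : ∀ A : Set ℝ, MeasurableSet A →
      W A = ∫⁻ s in rhoAux σ t ⁻¹' A ∩ Set.Ioi 0, ENNReal.ofReal (Real.exp (-s)) ∂volume := by
    intro A hA
    rw [hWdef, Measure.map_apply hρm hA, withDensity_apply _ (hρm hA),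
      Measure.restrict_restrict (hρm hA)]
  have hWle : ∀ A : Set ℝ, MeasurableSet A → W A ≤ 1 := by
    intro A hA
    rw [hWapply A hA]
    calc ∫⁻ s in rhoAux σ t ⁻¹' A ∩ Set.Ioi 0, ENNReal.ofReal (Real.exp (-s)) ∂volume
        ≤ ∫⁻ s in Set.Ioi 0, ENNReal.ofReal (Real.exp (-s)) ∂volume :=
          lintegral_mono_set Set.inter_subset_right
      _ = 1 := by rw [lint_exp_Ioi 0]; simp
  -- main computation
  have key : ∀ a b : ℝ, 0 ≤ a → a < b → W (Set.Ico a b) = ν t (Set.Ico a b) := by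
    intro a b ha hab
    have hb : 0 < b := lt_of_le_of_lt ha hab
    have hσb : 0 < σ b := sigma_pos hσmono hσrange hσzero hb
    set L : ℝ → ℝ := fun r => t * (-Real.log (σ r)) with hLdef
    have hLb : 0 ≤ L b := by
      have : Real.log (σ b) ≤ 0 := Real.log_nonpos hσb.le (hσrange b hb.le).2
      have : 0 ≤ -Real.log (σ b) := by linarith
      exact mul_nonneg ht.le this
    have hexpL : ∀ r : ℝ, 0 < r → Real.exp (-(L r)) = σ r ^ t := by
      intro r hr
      rw [Real.rpow_def_of_pos (sigma_pos hσmono hσrange hσzero hr)]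
      congr 1
      simp only [hLdef]
      ring
    have hmemlt : ∀ s : ℝ, 0 < s → (rhoAux σ t s < b ↔ L b < s) := by
      intro s hs
      rw [← not_le, ← not_le, not_iff_not,
        le_rho_iff ht hσmono hσrange hσlc hσzero hσtop hs hb.le,
        sigma_le_exp_iff ht hσb]
    rw [hWapply _ measurableSet_Ico]
    rcases eq_or_lt_of_le ha with rfl | ha'
    · -- a = 0
      have hset : rhoAux σ t ⁻¹' Set.Ico 0 b ∩ Set.Ioi 0 = Set.Ioi (L b) := by
        ext s
        simp only [Set.mem_inter_iff, Set.mem_preimage, Set.mem_Ico, Set.mem_Ioi]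
        constructor
        · rintro ⟨⟨_, h2⟩, hs⟩
          exact (hmemlt s hs).mp h2
        · intro h
          have hs : 0 < s := lt_of_le_of_lt hLb h
          exact ⟨⟨rho_nonneg hσmono s, (hmemlt s hs).mpr h⟩, hs⟩
      rw [hset, lint_exp_Ioi, hexpL b hb, hν t ht 0 b le_rfl hb.le,
        sigma_zero hσmono hσrange hσzero, Real.zero_rpow ht.ne', sub_zero]
    · -- 0 < a
      have hσa : 0 < σ a := sigma_pos hσmono hσrange hσzero ha'
      have hLab : L b ≤ L a := by
        have h1 : σ a ≤ σ b := (hσmono ha'.le hb.le hab).le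
        have h2 : Real.log (σ a) ≤ Real.log (σ b) := Real.log_le_log hσa h1
        have : -Real.log (σ b) ≤ -Real.log (σ a) := by linarith
        exact mul_le_mul_of_nonneg_left this ht.le
      have hmemge : ∀ s : ℝ, 0 < s → (a ≤ rhoAux σ t s ↔ s ≤ L a) := by
        intro s hs
        rw [le_rho_iff ht hσmono hσrange hσlc hσzero hσtop hs ha'.le,
          sigma_le_exp_iff ht hσa]
      have hset : rhoAux σ t ⁻¹' Set.Ico a b ∩ Set.Ioi 0 = Set.Ioc (L b) (L a) := by
        ext s
        simp only [Set.mem_inter_iff, Set.mem_preimage, Set.mem_Ico, Set.mem_Ioc, Set.mem_Ioi]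
        constructor
        · rintro ⟨⟨h1, h2⟩, hs⟩
          exact ⟨(hmemlt s hs).mp h2, (hmemge s hs).mp h1⟩
        · rintro ⟨h1, h2⟩
          have hs : 0 < s := lt_of_le_of_lt hLb h1
          exact ⟨⟨(hmemge s hs).mpr h2, (hmemlt s hs).mpr h1⟩, hs⟩
      rw [hset, lint_exp_Ioc hLab, hexpL b hb, hexpL a ha', hν t ht a b ha'.le hab.le]
  -- assemble via extensionality
  symm
  refine Measure.ext_of_Ico' W (ν t) (fun a b hab => ?_) (fun a b hab => ?_)
  · exact ((hWle _ measurableSet_Ico).trans_lt ENNReal.one_lt_top).ne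
  · have hWneg : ∀ c d : ℝ, d ≤ 0 → W (Set.Ico c d) = 0 := by
      intro c d hd
      rw [hWapply _ measurableSet_Ico]
      have : rhoAux σ t ⁻¹' Set.Ico c d = ∅ := by
        ext s
        simp only [Set.mem_preimage, Set.mem_Ico, Set.mem_empty_iff_false, iff_false, not_and]
        intro _
        exact not_lt.mpr (hd.trans (rho_nonneg hσmono s))
      rw [this, Set.empty_inter]
      simp
    have hνnegIco : ∀ c d : ℝ, d ≤ 0 → ν t (Set.Ico c d) = 0 := by
      intro c d hd
      exact measure_mono_null (fun s hs => lt_of_lt_of_le hs.2 hd) (hνneg t ht)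
    rcases le_or_gt b 0 with hb | hb
    · rw [hWneg a b hb, hνnegIco a b hb]
    · rcases le_or_gt 0 a with ha | ha
      · exact key a b ha hab
      · have hdisj : Disjoint (Set.Ico a 0) (Set.Ico (0:ℝ) b) :=
          Set.disjoint_left.mpr fun s hs hs' => absurd hs.2 (not_lt.mpr hs'.1)
        rw [← Set.Ico_union_Ico_eq_Ico ha.le hb.le,
          measure_union hdisj measurableSet_Ico,
          measure_union hdisj measurableSet_Ico,
          hWneg a 0 le_rfl, hνnegIco a 0 le_rfl, key 0 b le_rfl hb]

lemma ballEqAux {X : Type*} [MetricSpace X] (ht : 0 < t)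
    (hσmono : StrictMonoOn σ (Set.Ici 0))
    (hσrange : ∀ r : ℝ, 0 ≤ r → σ r ∈ Set.Icc (0:ℝ) 1)
    (hσlc : ∀ r : ℝ, 0 < r → ContinuousWithinAt σ (Set.Iic r) r)
    (hσzero : Tendsto σ (nhdsWithin 0 (Set.Ioi 0)) (nhds 0))
    (hσtop : Tendsto σ atTop (nhds 1)) {s : ℝ} (hs : 0 < s) (x : X) :
    closedBall x (rhoAux σ t s) = starBall σ x (1 / (s / t)) := by
  ext z
  simp only [mem_closedBall, starBall, Set.mem_setOf_eq]
  rcases eq_or_ne z x with rfl | hz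
  · simp only [dist_self, dstar, if_pos rfl]
    constructor
    · intro _; positivity
    · intro _; exact rho_nonneg hσmono s
  · have hxz : x ≠ z := fun h => hz h.symm
    have hd' : 0 < dist x z := dist_pos.mpr hxz
    have hσd : 0 < σ (dist x z) := sigma_pos hσmono hσrange hσzero hd'
    have hσd1 : σ (dist x z) < 1 := sigma_lt_one hσmono hσrange hd'.le
    have hA : 0 < Real.log (1 / σ (dist x z)) := by
      rw [one_div, Real.log_inv]
      have := Real.log_neg hσd hσd1
      linarith
    have hAeq : Real.log (1 / σ (dist x z)) = -Real.log (σ (dist x z)) := by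
      rw [one_div, Real.log_inv]
    rw [dist_comm z x, dstar, if_neg hxz, one_div_div]
    rw [le_rho_iff ht hσmono hσrange hσlc hσzero hσtop hs hd'.le,
      sigma_le_exp_iff ht hσd]
    rw [div_le_div_iff₀ hA hs, one_mul, hAeq]

theorem statement6_core
    {X : Type*} [MetricSpace X] [TopologicalSpace.SeparableSpace X]
    [MeasurableSpace X] [BorelSpace X]
    (μ : Measure X)
    (σ : ℝ → ℝ)
    (hσmono : StrictMonoOn σ (Set.Ici 0))
    (hσrange : ∀ r : ℝ, 0 ≤ r → σ r ∈ Set.Icc (0:ℝ) 1)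
    (hσlc : ∀ r : ℝ, 0 < r → ContinuousWithinAt σ (Set.Iic r) r)
    (hσzero : Tendsto σ (nhdsWithin 0 (Set.Ioi 0)) (nhds 0))
    (hσtop : Tendsto σ atTop (nhds 1))
    (ν : ℝ → Measure ℝ)
    (hν : ∀ t : ℝ, 0 < t → ∀ a b : ℝ, 0 ≤ a → a ≤ b →
      ν t (Set.Ico a b) = ENNReal.ofReal (σ b ^ t - σ a ^ t))
    (hνneg : ∀ t : ℝ, 0 < t → ν t (Set.Iio 0) = 0)
    (t : ℝ) (ht : 0 < t) (x y : X) :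
    (x = y → heatK μ ν t x y =
      ∫⁻ s in Set.Ioi (0:ℝ), specN μ σ x (s / t) * ENNReal.ofReal (Real.exp (-s))) ∧
    (x ≠ y → heatK μ ν t x y =
      ∫⁻ s in Set.Ioc (0:ℝ) (t / dstar σ x y),
        specN μ σ x (s / t) * ENNReal.ofReal (Real.exp (-s))) ∧
    (x = y → heatK μ ν t x y =
      ENNReal.ofReal t *
        ∫⁻ τ in Set.Ioi (0:ℝ), specN μ σ x τ * ENNReal.ofReal (Real.exp (-(τ * t)))) ∧
    (x ≠ y → heatK μ ν t x y =
      ENNReal.ofReal t *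
        ∫⁻ τ in Set.Ioc (0:ℝ) (1 / dstar σ x y),
          specN μ σ x τ * ENNReal.ofReal (Real.exp (-(τ * t)))) := by
  have hρm : Measurable (rhoAux σ t) := rho_measurable ht hσmono hσrange hσlc hσzero hσtop
  have hg : Measurable (fun s : ℝ => ENNReal.ofReal (Real.exp (-s))) :=
    (Real.measurable_exp.comp measurable_neg).ennreal_ofReal
  have hFmeas : Measurable (fun r : ℝ => (μ (closedBall x r))⁻¹) := by
    have hmono : Monotone (fun r : ℝ => μ (closedBall x r)) :=
      fun r r' hrr' => measure_mono (closedBall_subset_closedBall hrr')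
    exact hmono.measurable.inv
  have hFρ : Measurable (fun s : ℝ => (μ (closedBall x (rhoAux σ t s)))⁻¹) :=
    hFmeas.comp hρm
  have hfmeas : Measurable (fun s : ℝ =>
      ENNReal.ofReal (Real.exp (-s)) * (μ (closedBall x (rhoAux σ t s)))⁻¹) :=
    hg.mul (hFmeas.comp hρm)
  -- rewrite heatK as an integral over s
  have hheat : heatK μ ν t x y
      = ∫⁻ s in rhoAux σ t ⁻¹' Set.Ici (dist x y) ∩ Set.Ioi 0,
          ENNReal.ofReal (Real.exp (-s)) * (μ (closedBall x (rhoAux σ t s)))⁻¹ ∂volume := by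
    unfold heatK
    rw [nu_eq_map ht hσmono hσrange hσlc hσzero hσtop ν hν hνneg,
      setLIntegral_map measurableSet_Ici hFmeas hρm,
      restrict_withDensity (hρm measurableSet_Ici),
      Measure.restrict_restrict (hρm measurableSet_Ici),
      lintegral_withDensity_eq_lintegral_mul _ hg hFρ]
    rfl
  -- integrand identity
  have hcongr : ∀ s : ℝ, 0 < s →
      ENNReal.ofReal (Real.exp (-s)) * (μ (closedBall x (rhoAux σ t s)))⁻¹
        = specN μ σ x (s / t) * ENNReal.ofReal (Real.exp (-s)) := by
    intro s hs
    rw [ballEqAux ht hσmono hσrange hσlc hσzero hσtop hs x, mul_comm]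
    rfl
  -- the sets
  have hset1 : x = y → rhoAux σ t ⁻¹' Set.Ici (dist x y) ∩ Set.Ioi 0 = Set.Ioi 0 := by
    intro hxy
    rw [hxy, dist_self]
    refine Set.eq_of_subset_of_subset Set.inter_subset_right (fun s hs => ?_)
    exact ⟨rho_nonneg hσmono s, hs⟩
  have hset2 : x ≠ y → rhoAux σ t ⁻¹' Set.Ici (dist x y) ∩ Set.Ioi 0
      = Set.Ioc 0 (t / dstar σ x y) ∧ t / dstar σ x y = t * (-Real.log (σ (dist x y))) := by
    intro hxy
    have hd : 0 < dist x y := dist_pos.mpr hxy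
    have hL : Real.log (1 / σ (dist x y)) = -Real.log (σ (dist x y)) := by
      rw [one_div, Real.log_inv]
    have hdst : t / dstar σ x y = t * (-Real.log (σ (dist x y))) := by
      rw [dstar, if_neg hxy, hL]
      field_simp
    constructor
    · rw [rho_preimage_Ici ht hσmono hσrange hσlc hσzero hσtop hd, hdst]
      exact Set.inter_eq_self_of_subset_left (fun s hs => hs.1)
    · exact hdst
  refine ⟨?_, ?_, ?_, ?_⟩
  · -- statement 1
    intro hxy
    rw [hheat, hset1 hxy]
    exact setLIntegral_congr_fun measurableSet_Ioi
      (fun s hs => hcongr s hs)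
  · -- statement 2
    intro hxy
    rw [hheat, (hset2 hxy).1]
    exact setLIntegral_congr_fun measurableSet_Ioc
      (fun s hs => hcongr s hs.1)
  · -- statement 3
    intro hxy
    rw [hheat, hset1 hxy,
      scale_lintegral_aux ht _ hfmeas (Set.Ioi 0) measurableSet_Ioi]
    have hpre : (fun τ : ℝ => t * τ) ⁻¹' Set.Ioi 0 = Set.Ioi 0 := by
      ext τ
      simp only [Set.mem_preimage, Set.mem_Ioi]
      exact mul_pos_iff_of_pos_left ht
    rw [hpre]
    congr 1
    refine setLIntegral_congr_fun measurableSet_Ioi (fun τ hτ => ?_)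
    have hts : 0 < t * τ := mul_pos ht hτ
    rw [hcongr _ hts]
    have : (t * τ) / t = τ := by field_simp
    rw [this, mul_comm t τ]
  · -- statement 4
    intro hxy
    obtain ⟨hset, hdst⟩ := hset2 hxy
    rw [hheat, hset, scale_lintegral_aux ht _ hfmeas _ measurableSet_Ioc]
    have hAlog : 1 / dstar σ x y = -Real.log (σ (dist x y)) := by
      rw [dstar, if_neg hxy, one_div_one_div, one_div, Real.log_inv]
    have hpre : (fun τ : ℝ => t * τ) ⁻¹' Set.Ioc 0 (t / dstar σ x y)
        = Set.Ioc 0 (1 / dstar σ x y) := by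
      ext τ
      simp only [Set.mem_preimage, Set.mem_Ioc]
      rw [hdst, hAlog]
      constructor
      · rintro ⟨h1, h2⟩
        exact ⟨(mul_pos_iff_of_pos_left ht).mp h1, le_of_mul_le_mul_left h2 ht⟩
      · rintro ⟨h1, h2⟩
        exact ⟨mul_pos ht h1, mul_le_mul_of_nonneg_left h2 ht.le⟩
    rw [hpre]
    congr 1
    refine setLIntegral_congr_fun measurableSet_Ioc (fun τ hτ => ?_)
    have hts : 0 < t * τ := mul_pos ht hτ.1
    have hdiv : (t * τ) / t = τ := by field_simp
    rw [hcongr _ hts, hdiv, mul_comm t τ]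

end Rho


theorem statement_6
    {X : Type*} [MetricSpace X] [TopologicalSpace.SeparableSpace X]
    [MeasurableSpace X] [BorelSpace X]
    (hd : ∀ x y z : X, dist x z ≤ max (dist x y) (dist y z))
    (hcb : ∀ (x : X) (r : ℝ), IsCompact (closedBall x r))
    (μ : Measure X)
    (hμpos : ∀ (x : X) (r : ℝ), 0 < r → 0 < μ (closedBall x r))
    (hμfin : ∀ (x : X) (r : ℝ), 0 < r → μ (closedBall x r) < ⊤)
    (σ : ℝ → ℝ)
    (hσmono : StrictMonoOn σ (Set.Ici 0))
    (hσrange : ∀ r : ℝ, 0 ≤ r → σ r ∈ Set.Icc (0:ℝ) 1)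
    (hσlc : ∀ r : ℝ, 0 < r → ContinuousWithinAt σ (Set.Iic r) r)
    (hσzero : Tendsto σ (nhdsWithin 0 (Set.Ioi 0)) (nhds 0))
    (hσtop : Tendsto σ atTop (nhds 1))
    (ν : ℝ → Measure ℝ)
    (hν : ∀ t : ℝ, 0 < t → ∀ a b : ℝ, 0 ≤ a → a ≤ b →
      ν t (Set.Ico a b) = ENNReal.ofReal (σ b ^ t - σ a ^ t))
    (hνneg : ∀ t : ℝ, 0 < t → ν t (Set.Iio 0) = 0)
    (t : ℝ) (ht : 0 < t) (x y : X) :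
    (x = y → heatK μ ν t x y =
      ∫⁻ s in Set.Ioi (0:ℝ), specN μ σ x (s / t) * ENNReal.ofReal (Real.exp (-s))) ∧
    (x ≠ y → heatK μ ν t x y =
      ∫⁻ s in Set.Ioc (0:ℝ) (t / dstar σ x y),
        specN μ σ x (s / t) * ENNReal.ofReal (Real.exp (-s))) ∧
    (x = y → heatK μ ν t x y =
      ENNReal.ofReal t *
        ∫⁻ τ in Set.Ioi (0:ℝ), specN μ σ x τ * ENNReal.ofReal (Real.exp (-(τ * t)))) ∧
    (x ≠ y → heatK μ ν t x y =
      ENNReal.ofReal t *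
        ∫⁻ τ in Set.Ioc (0:ℝ) (1 / dstar σ x y),
          specN μ σ x τ * ENNReal.ofReal (Real.exp (-(τ * t)))) :=
  statement6_core μ σ hσmono hσrange hσlc hσzero hσtop ν hν hνneg t ht x y
end

section
/- For every x ∈ X the function t ↦ p(t,x,x) is monotone non-increasing on (0,∞), and p(t,x,x) < ∞ for every t > T(x), where T(x) = limsup_{τ→∞} (log N(x,τ))/τ. -/
open MeasureTheory Metric Filter
open scoped ENNReal Classical

open scoped Topology
open Set

/-- comparison of the measures of lower sets in `(0,∞)` -/
lemma aux_lower_le (σ : ℝ → ℝ) (t1 t2 : ℝ) (ht1 : 0 < t1) (h12 : t1 ≤ t2)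
    (hσ0 : ∀ r, 0 ≤ r → 0 ≤ σ r) (hσ1 : ∀ r, 0 ≤ r → σ r ≤ 1)
    (ν1 ν2 : Measure ℝ)
    (h1 : ∀ b, 0 ≤ b → ν1 (Set.Ico 0 b) = ENNReal.ofReal (σ b ^ t1))
    (h2 : ∀ b, 0 ≤ b → ν2 (Set.Ico 0 b) = ENNReal.ofReal (σ b ^ t2))
    (hz1 : ν1 {0} = 0) (hz2 : ν2 {0} = 0)
    (L : Set ℝ) (hL : L ⊆ Set.Ioi 0)
    (hlow : ∀ a ∈ L, ∀ b : ℝ, 0 < b → b ≤ a → b ∈ L) :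
    ν2 L ≤ ν1 L := by
  have ht2 : 0 < t2 := lt_of_lt_of_le ht1 h12
  -- pointwise comparison of the increments
  have key : ∀ b : ℝ, 0 ≤ b → ENNReal.ofReal (σ b ^ t2) ≤ ENNReal.ofReal (σ b ^ t1) := by
    intro b hb
    rcases eq_or_lt_of_le (hσ0 b hb) with h | h
    · rw [← h, Real.zero_rpow ht1.ne', Real.zero_rpow ht2.ne']
    · exact ENNReal.ofReal_le_ofReal
        (Real.rpow_le_rpow_of_exponent_ge h (hσ1 b hb) h12)
  set L' : Set ℝ := L ∪ {0} with hL'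
  have hL'm1 : ν1 L' = ν1 L := le_antisymm
    ((measure_union_le _ _).trans (by rw [hz1, add_zero]))
    (measure_mono Set.subset_union_left)
  have hL'm2 : ν2 L' = ν2 L := le_antisymm
    ((measure_union_le _ _).trans (by rw [hz2, add_zero]))
    (measure_mono Set.subset_union_left)
  rw [← hL'm1, ← hL'm2]
  have hL'sub : L' ⊆ Set.Ici 0 := by
    rintro r (hr | hr)
    · exact le_of_lt (Set.mem_Ioi.mp (hL hr))
    · simp_all
  have hlow' : ∀ a ∈ L', ∀ b : ℝ, 0 ≤ b → b ≤ a → b ∈ L' := by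
    rintro a ha b hb hba
    rcases eq_or_lt_of_le hb with rfl | hb'
    · exact Or.inr rfl
    rcases ha with ha | ha
    · exact Or.inl (hlow a ha b hb' hba)
    · simp only [Set.mem_singleton_iff] at ha; subst ha
      exact absurd (lt_of_lt_of_le hb' hba) (lt_irrefl 0)
  by_cases hbdd : BddAbove L'
  · -- bounded case
    have h0L' : (0:ℝ) ∈ L' := Or.inr rfl
    have hne : L'.Nonempty := ⟨0, h0L'⟩
    set c := sSup L' with hc
    have hc0 : 0 ≤ c := le_csSup hbdd h0L'
    have hsub1 : Set.Ico 0 c ⊆ L' := by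
      intro r ⟨hr0, hrc⟩
      obtain ⟨a, ha, hra⟩ := exists_lt_of_lt_csSup hne hrc
      exact hlow' a ha r hr0 hra.le
    have hsub2 : L' ⊆ Set.Icc 0 c := fun r hr => ⟨hL'sub hr, le_csSup hbdd hr⟩
    by_cases hcL : c ∈ L'
    · -- L' = Icc 0 c
      have hEq : L' = Set.Icc 0 c := by
        apply Set.Subset.antisymm hsub2
        intro r ⟨hr0, hrc⟩
        rcases eq_or_lt_of_le hrc with rfl | h
        · exact hcL
        · exact hsub1 ⟨hr0, h⟩
      rw [hEq]
      have step : ∀ n : ℕ, ν2 (Set.Icc 0 c) ≤ ν1 (Set.Ico 0 (c + 1 / (n + 1))) := by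
        intro n
        have hpos : (0:ℝ) < 1 / (n + 1) := by positivity
        have hsub : Set.Icc 0 c ⊆ Set.Ico 0 (c + 1 / (n + 1)) := fun r ⟨h0, h1⟩ =>
          ⟨h0, lt_of_le_of_lt h1 (by linarith)⟩
        calc ν2 (Set.Icc 0 c) ≤ ν2 (Set.Ico 0 (c + 1 / (n + 1))) := measure_mono hsub
          _ = ENNReal.ofReal (σ (c + 1 / (n + 1)) ^ t2) := h2 _ (by linarith)
          _ ≤ ENNReal.ofReal (σ (c + 1 / (n + 1)) ^ t1) := key _ (by linarith)
          _ = ν1 (Set.Ico 0 (c + 1 / (n + 1))) := (h1 _ (by linarith)).symm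
      have hInter : (⋂ n : ℕ, Set.Ico 0 (c + 1 / (n + 1))) = Set.Icc 0 c := by
        ext r
        simp only [Set.mem_iInter, Set.mem_Ico, Set.mem_Icc]
        constructor
        · intro h
          refine ⟨(h 0).1, ?_⟩
          by_contra hrc
          push_neg at hrc
          obtain ⟨n, hn⟩ := exists_nat_one_div_lt (sub_pos.mpr hrc)
          exact absurd (h n).2 (by push_neg; linarith)
        · intro ⟨h0, h1⟩ n
          have : (0:ℝ) < 1 / (n + 1) := by positivity
          exact ⟨h0, by linarith⟩
      have hmono : ∀ m n : ℕ, m ≤ n →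
          Set.Ico (0:ℝ) (c + 1 / (n + 1)) ⊆ Set.Ico 0 (c + 1 / (m + 1)) := by
        intro m n hmn r ⟨h0, h1⟩
        refine ⟨h0, lt_of_lt_of_le h1 ?_⟩
        have hcast : ((m:ℝ)) ≤ (n:ℝ) := Nat.cast_le.mpr hmn
        have h1' : (1:ℝ) / (n+1) ≤ 1 / (m+1) := by
          apply one_div_le_one_div_of_le (by positivity)
          linarith
        linarith
      have hiInf : ν1 (Set.Icc 0 c) = ⨅ n : ℕ, ν1 (Set.Ico 0 (c + 1 / (n + 1))) := by
        rw [← hInter]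
        apply Directed.measure_iInter
        · exact fun n => (measurableSet_Ico).nullMeasurableSet
        · intro m n
          exact ⟨max m n, hmono _ _ (le_max_left _ _), hmono _ _ (le_max_right _ _)⟩
        · refine ⟨0, ?_⟩
          rw [h1 _ (by linarith [hc0] : (0:ℝ) ≤ c + 1/((0:ℕ)+1))]
          exact ENNReal.ofReal_ne_top
      rw [hiInf]
      exact le_iInf step
    · -- L' = Ico 0 c
      have hEq : L' = Set.Ico 0 c := by
        apply Set.Subset.antisymm
        · intro r hr
          refine ⟨hL'sub hr, ?_⟩
          rcases eq_or_lt_of_le (le_csSup hbdd hr) with rfl | h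
          · exact absurd hr hcL
          · exact h
        · exact hsub1
      rw [hEq, h1 _ hc0, h2 _ hc0]
      exact key _ hc0
  · -- unbounded case : L' = Ici 0
    have hEq : L' = Set.Ici 0 := by
      apply Set.Subset.antisymm hL'sub
      intro r hr
      obtain ⟨a, ha, hra⟩ := not_bddAbove_iff.mp hbdd r
      exact hlow' a ha r hr hra.le
    have hUnion : Set.Ici (0:ℝ) = ⋃ n : ℕ, Set.Ico 0 (n : ℝ) := by
      ext r
      simp only [Set.mem_Ici, Set.mem_iUnion, Set.mem_Ico]
      constructor
      · intro h
        exact ⟨⌊r⌋₊ + 1, h, by exact_mod_cast Nat.lt_floor_add_one r⟩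
      · rintro ⟨n, h0, _⟩; exact h0
    have hdir : Directed (· ⊆ ·) (fun n : ℕ => Set.Ico (0:ℝ) n) := by
      intro m n
      exact ⟨max m n, fun r ⟨h0, h1⟩ => ⟨h0, lt_of_lt_of_le h1 (by exact_mod_cast le_max_left m n)⟩,
        fun r ⟨h0, h1⟩ => ⟨h0, lt_of_lt_of_le h1 (by exact_mod_cast le_max_right m n)⟩⟩
    rw [hEq, hUnion, hdir.measure_iUnion, hdir.measure_iUnion]
    apply iSup_mono
    intro n
    rw [h1 _ (Nat.cast_nonneg n), h2 _ (Nat.cast_nonneg n)]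
    exact key _ (Nat.cast_nonneg n)

lemma aux_mono
    {X : Type*} [MetricSpace X]
    [MeasurableSpace X] [BorelSpace X]
    (μ : Measure X)
    (hμpos : ∀ (x : X) (r : ℝ), 0 < r → 0 < μ (closedBall x r))
    (σ : ℝ → ℝ)
    (hσ0 : ∀ r, 0 ≤ r → 0 ≤ σ r) (hσ1 : ∀ r, 0 ≤ r → σ r ≤ 1)
    (ν : ℝ → Measure ℝ)
    (hIco : ∀ t : ℝ, 0 < t → ∀ b : ℝ, 0 ≤ b →
        ν t (Set.Ico 0 b) = ENNReal.ofReal (σ b ^ t))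
    (hzero : ∀ t : ℝ, 0 < t → ν t {0} = 0)
    (x : X) (t1 t2 : ℝ) (ht1 : 0 < t1) (ht2 : 0 < t2) (h12 : t1 ≤ t2) :
    ∫⁻ r in Set.Ici (0:ℝ), (μ (closedBall x r))⁻¹ ∂(ν t2)
      ≤ ∫⁻ r in Set.Ici (0:ℝ), (μ (closedBall x r))⁻¹ ∂(ν t1) := by
  set g : ℝ → ℝ≥0∞ := fun r => (μ (closedBall x r))⁻¹ with hg
  have hganti : Antitone g := by
    intro a b hab
    exact ENNReal.inv_le_inv.mpr (measure_mono (closedBall_subset_closedBall hab))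
  have hgmeas : Measurable g := hganti.measurable
  have hgne : ∀ r : ℝ, 0 < r → g r ≠ ⊤ := by
    intro r hr
    exact ENNReal.inv_ne_top.mpr (hμpos x r hr).ne'
  have hae : ∀ t : ℝ, 0 < t → (Set.Ici (0:ℝ) : Set ℝ) =ᵐ[ν t] Set.Ioi 0 := by
    intro t ht
    rw [MeasureTheory.ae_eq_set]
    constructor
    · rw [Set.Ici_sdiff_Ioi, Set.Icc_self]
      exact hzero t ht
    · rw [Set.diff_eq_empty.mpr Set.Ioi_subset_Ici_self]
      exact measure_empty
  have keyrep : ∀ t : ℝ, 0 < t →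
      ∫⁻ r in Set.Ici (0:ℝ), g r ∂(ν t)
        = ∫⁻ lam in Set.Ioi (0:ℝ), (ν t) ({r : ℝ | lam < (g r).toReal} ∩ Set.Ioi 0) := by
    intro t ht
    rw [setLIntegral_congr (hae t ht)]
    have h1 : ∫⁻ r in Set.Ioi (0:ℝ), g r ∂(ν t)
        = ∫⁻ r in Set.Ioi (0:ℝ), ENNReal.ofReal ((g r).toReal) ∂(ν t) := by
      apply setLIntegral_congr_fun measurableSet_Ioi
      exact fun r hr => (ENNReal.ofReal_toReal (hgne r hr)).symm
    rw [h1,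
      lintegral_eq_lintegral_meas_lt ((ν t).restrict (Set.Ioi 0))
        (ae_of_all _ fun r => ENNReal.toReal_nonneg)
        (hgmeas.ennreal_toReal).aemeasurable]
    apply lintegral_congr fun lam => ?_
    rw [Measure.restrict_apply]
    exact (hgmeas.ennreal_toReal) measurableSet_Ioi
  rw [keyrep t1 ht1, keyrep t2 ht2]
  apply lintegral_mono fun lam => ?_
  apply aux_lower_le σ t1 t2 ht1 h12 hσ0 hσ1 (ν t1) (ν t2) (hIco t1 ht1) (hIco t2 ht2)
    (hzero t1 ht1) (hzero t2 ht2) _ Set.inter_subset_right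
  rintro a ⟨ha1, ha2⟩ b hb hba
  refine ⟨?_, hb⟩
  have hle : g a ≤ g b := hganti hba
  have : (g a).toReal ≤ (g b).toReal :=
    (ENNReal.toReal_le_toReal (hgne a (lt_of_lt_of_le hb hba))
      (hgne b hb)).mpr hle
  exact lt_of_lt_of_le ha1 this

lemma aux_fin
    {X : Type*} [MetricSpace X]
    [MeasurableSpace X] [BorelSpace X]
    (μ : Measure X)
    (hμpos : ∀ (x : X) (r : ℝ), 0 < r → 0 < μ (closedBall x r))
    (hμfin : ∀ (x : X) (r : ℝ), 0 < r → μ (closedBall x r) < ⊤)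
    (σ : ℝ → ℝ)
    (hσmono : StrictMonoOn σ (Set.Ici 0))
    (hσrange : ∀ r : ℝ, 0 ≤ r → σ r ∈ Set.Icc (0:ℝ) 1)
    (hσlc : ∀ r : ℝ, 0 < r → ContinuousWithinAt σ (Set.Iic r) r)
    (hσzero : Tendsto σ (nhdsWithin 0 (Set.Ioi 0)) (nhds 0))
    (hσtop : Tendsto σ atTop (nhds 1))
    (ν : ℝ → Measure ℝ)
    (hν : ∀ t : ℝ, 0 < t → ∀ a b : ℝ, 0 ≤ a → a ≤ b →
      ν t (Set.Ico a b) = ENNReal.ofReal (σ b ^ t - σ a ^ t))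
    -- derived facts, assumed here:
    (hσ00 : σ 0 = 0)
    (hσpos : ∀ r : ℝ, 0 < r → 0 < σ r)
    (hσlt1 : ∀ r : ℝ, 0 ≤ r → σ r < 1)
    (hzero : ∀ t : ℝ, 0 < t → ν t {0} = 0)
    (hIci1 : ∀ t : ℝ, 0 < t → ν t (Set.Ici 0) ≤ 1)
    (x : X) (t : ℝ) (ht : 0 < t)
    (hlim : limsup (fun τ : ℝ => ((Real.log ((specN μ σ x τ).toReal) / τ : ℝ) : EReal)) atTop
      < (t : EReal)) :
    ∫⁻ r in Set.Ici (0:ℝ), (μ (closedBall x r))⁻¹ ∂(ν t) < ⊤ := by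
  have hmono' : MonotoneOn σ (Set.Ici 0) := hσmono.monotoneOn
  set g : ℝ → ℝ≥0∞ := fun r => (μ (closedBall x r))⁻¹ with hgdef
  have hganti : Antitone g := fun a b hab =>
    ENNReal.inv_le_inv.mpr (measure_mono (closedBall_subset_closedBall hab))
  have hgne : ∀ r : ℝ, 0 < r → g r ≠ ⊤ := fun r hr =>
    ENNReal.inv_ne_top.mpr (hμpos x r hr).ne'
  -- extract t' and τ0 from the limsup hypothesis
  obtain ⟨t', hlt', ht't⟩ := EReal.lt_iff_exists_real_btwn.mp hlim
  have ht't' : t' < t := by exact_mod_cast ht't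
  have hev : ∀ᶠ τ : ℝ in atTop,
      ((Real.log ((specN μ σ x τ).toReal) / τ : ℝ) : EReal) < (t' : EReal) :=
    eventually_lt_of_limsup_lt hlt'
  obtain ⟨τ0, hτ0⟩ := eventually_atTop.mp hev
  -- the sets S_q and their suprema
  set Sq : ℝ → Set ℝ := fun τ => {r : ℝ | 0 ≤ r ∧ σ r ≤ Real.exp (-τ)} with hSq
  set b : ℝ → ℝ := fun τ => sSup (Sq τ) with hb
  have hne' : ∀ τ : ℝ, 0 < τ → ∃ r : ℝ, 0 < r ∧ r ∈ Sq τ := by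
    intro τ hτ
    have h1 : ∀ᶠ r in 𝓝[>] (0:ℝ), σ r < Real.exp (-τ) :=
      hσzero.eventually_lt_const (Real.exp_pos _)
    obtain ⟨r, hr1, hr2⟩ := (h1.and eventually_mem_nhdsWithin).exists
    exact ⟨r, hr2, ⟨le_of_lt hr2, hr1.le⟩⟩
  have hne : ∀ τ : ℝ, 0 < τ → (Sq τ).Nonempty := fun τ hτ =>
    (hne' τ hτ).elim fun r hr => ⟨r, hr.2⟩
  have hbdd : ∀ τ : ℝ, 0 < τ → BddAbove (Sq τ) := by
    intro τ hτ
    have hq1 : Real.exp (-τ) < 1 := Real.exp_lt_one_iff.mpr (by linarith)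
    obtain ⟨M, hM⟩ := eventually_atTop.mp (hσtop.eventually_const_lt hq1)
    refine ⟨M, fun r hr => ?_⟩
    by_contra h
    push_neg at h
    exact absurd hr.2 (not_le.mpr (hM r h.le))
  have hbpos : ∀ τ : ℝ, 0 < τ → 0 < b τ := by
    intro τ hτ
    obtain ⟨r, hr0, hrS⟩ := hne' τ hτ
    exact lt_of_lt_of_le hr0 (le_csSup (hbdd τ hτ) hrS)
  have hlt : ∀ τ : ℝ, 0 < τ → ∀ r : ℝ, 0 ≤ r → r < b τ → σ r ≤ Real.exp (-τ) := by
    intro τ hτ r hr0 hrb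
    obtain ⟨a, haS, hra⟩ := exists_lt_of_lt_csSup (hne τ hτ) hrb
    exact le_trans (hmono' hr0 (le_trans hr0 hra.le) hra.le) haS.2
  have hle : ∀ τ : ℝ, 0 < τ → ∀ r : ℝ, 0 ≤ r → r ≤ b τ → σ r ≤ Real.exp (-τ) := by
    intro τ hτ r hr0 hrb
    rcases eq_or_lt_of_le hrb with rfl | h
    · -- σ (b τ) ≤ exp (-τ) via left continuity
      have hbp := hbpos τ hτ
      have hc : ContinuousWithinAt σ (Set.Iio (b τ)) (b τ) :=
        (hσlc (b τ) hbp).mono Set.Iio_subset_Iic_self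
      apply le_of_tendsto hc
      have hmem : Set.Ioi (0:ℝ) ∈ 𝓝[<] (b τ) :=
        mem_nhdsWithin_of_mem_nhds (Ioi_mem_nhds hbp)
      filter_upwards [eventually_mem_nhdsWithin, hmem] with s hs1 hs2
      exact hlt τ hτ s (le_of_lt hs2) hs1
    · exact hlt τ hτ r hr0 h
  -- the star balls are the closed balls of radius b τ
  have hstar : ∀ τ : ℝ, 0 < τ → starBall σ x (1/τ) = closedBall x (b τ) := by
    intro τ hτ
    ext y
    simp only [starBall, Set.mem_setOf_eq, Metric.mem_closedBall, dstar]
    by_cases hxy : x = y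
    · subst hxy
      simp only [if_pos rfl, dist_self]
      constructor
      · intro _; exact (hbpos τ hτ).le
      · intro _; positivity
    · rw [if_neg hxy, dist_comm y x]
      have hd : 0 < dist x y := dist_pos.mpr hxy
      have hσd : 0 < σ (dist x y) := hσpos _ hd
      have hσd1 : σ (dist x y) < 1 := hσlt1 _ hd.le
      have hApos : 0 < Real.log (1 / σ (dist x y)) :=
        Real.log_pos (one_lt_one_div hσd hσd1)
      constructor
      · intro h
        have hτA : τ ≤ Real.log (1 / σ (dist x y)) :=
          le_of_one_div_le_one_div hApos h
        have : σ (dist x y) ≤ Real.exp (-τ) := by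
          rw [Real.log_div one_ne_zero hσd.ne', Real.log_one, zero_sub] at hτA
          have h2 : Real.log (σ (dist x y)) ≤ -τ := by linarith
          calc σ (dist x y) = Real.exp (Real.log (σ (dist x y))) :=
                (Real.exp_log hσd).symm
            _ ≤ Real.exp (-τ) := Real.exp_le_exp.mpr h2
        exact le_csSup (hbdd τ hτ) ⟨hd.le, this⟩
      · intro h
        have hσdq : σ (dist x y) ≤ Real.exp (-τ) := hle τ hτ _ hd.le h
        have hτA : τ ≤ Real.log (1 / σ (dist x y)) := by
          rw [Real.log_div one_ne_zero hσd.ne', Real.log_one, zero_sub]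
          have := (Real.log_le_log_iff hσd (Real.exp_pos _)).mpr hσdq
          rw [Real.log_exp] at this
          linarith
        exact one_div_le_one_div_of_le hτ hτA
  have hspec : ∀ τ : ℝ, 0 < τ → specN μ σ x τ = (μ (closedBall x (b τ)))⁻¹ := by
    intro τ hτ
    rw [specN, hstar τ hτ]
  -- bound on specN for large τ
  have hspecbd : ∀ τ : ℝ, max τ0 1 ≤ τ →
      specN μ σ x τ ≤ ENNReal.ofReal (Real.exp (t' * τ)) := by
    intro τ hτ
    have hτ1 : (1:ℝ) ≤ τ := le_trans (le_max_right _ _) hτ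
    have hτp : 0 < τ := lt_of_lt_of_le one_pos hτ1
    have hμB : 0 < μ (closedBall x (b τ)) := hμpos x _ (hbpos τ hτp)
    have hμBfin : μ (closedBall x (b τ)) < ⊤ := hμfin x _ (hbpos τ hτp)
    have hsne : specN μ σ x τ ≠ ⊤ := by
      rw [hspec τ hτp]; exact ENNReal.inv_ne_top.mpr hμB.ne'
    have hspos : 0 < (specN μ σ x τ).toReal := by
      apply ENNReal.toReal_pos _ hsne
      rw [hspec τ hτp]
      exact (ENNReal.inv_pos.mpr hμBfin.ne).ne'
    have hlog := hτ0 τ (le_trans (le_max_left _ _) hτ)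
    have hlog' : Real.log ((specN μ σ x τ).toReal) / τ < t' := by exact_mod_cast hlog
    have hlog2 : Real.log ((specN μ σ x τ).toReal) < t' * τ := by
      rw [div_lt_iff₀ hτp] at hlog'
      linarith [hlog']
    have := (Real.log_lt_iff_lt_exp hspos).mp hlog2
    exact (ENNReal.le_ofReal_iff_toReal_le hsne (Real.exp_nonneg _)).mpr this.le
  -- choose K0
  obtain ⟨K0, hK0⟩ := exists_nat_ge (max τ0 1)
  have hK0one : (1:ℝ) ≤ (K0:ℝ) := le_trans (le_max_right _ _) hK0
  set c : ℕ → ℝ := fun k => b ((K0 + k : ℕ) : ℝ) with hcdef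
  have hτpos : ∀ k : ℕ, (0:ℝ) < ((K0 + k : ℕ) : ℝ) := by
    intro k
    have : (K0:ℝ) ≤ ((K0 + k : ℕ):ℝ) := by push_cast; linarith [Nat.cast_nonneg (α := ℝ) k]
    linarith
  have hcpos : ∀ k : ℕ, 0 < c k := fun k => hbpos _ (hτpos k)
  have hSqmono : ∀ τ1 τ2 : ℝ, τ1 ≤ τ2 → Sq τ2 ⊆ Sq τ1 := by
    intro τ1 τ2 h12 r hr
    exact ⟨hr.1, le_trans hr.2 (Real.exp_le_exp.mpr (by linarith))⟩
  have hcanti : ∀ j k : ℕ, j ≤ k → c k ≤ c j := by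
    intro j k hjk
    apply csSup_le_csSup (hbdd _ (hτpos j)) (hne _ (hτpos k))
    apply hSqmono
    push_cast
    have : (j:ℝ) ≤ (k:ℝ) := Nat.cast_le.mpr hjk
    linarith
  -- the covering sets
  set s : ℕ → Set ℝ := fun n => match n with
    | 0 => ({0} : Set ℝ)
    | 1 => Set.Ici (c 0)
    | (j+2) => Set.Ico (c (j+1)) (c j) with hsdef
  have hcov : Set.Ici (0:ℝ) ⊆ ⋃ n : ℕ, s n := by
    intro r hr
    rw [Set.mem_Ici] at hr
    rcases eq_or_lt_of_le hr with rfl | hr0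
    · exact Set.mem_iUnion.mpr ⟨0, rfl⟩
    by_cases hc0 : c 0 ≤ r
    · exact Set.mem_iUnion.mpr ⟨1, hc0⟩
    push_neg at hc0
    have hex : ∃ j : ℕ, c j ≤ r := by
      by_contra hcon
      push_neg at hcon
      have hbound : ∀ j : ℕ, σ r ≤ Real.exp (-(j:ℝ)) := by
        intro j
        have h1 : σ r ≤ Real.exp (-((K0 + j : ℕ):ℝ)) :=
          hlt _ (hτpos j) r hr0.le (hcon j)
        apply le_trans h1
        apply Real.exp_le_exp.mpr
        have : (j:ℝ) ≤ ((K0 + j:ℕ):ℝ) := by push_cast; linarith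
        linarith
      have htendexp : Tendsto (fun j : ℕ => Real.exp (-(j:ℝ))) atTop (𝓝 0) :=
        Real.tendsto_exp_neg_atTop_nhds_zero.comp tendsto_natCast_atTop_atTop
      have : σ r ≤ 0 := ge_of_tendsto htendexp (Eventually.of_forall hbound)
      exact absurd this (not_le.mpr (hσpos r hr0))
    have hJ0 : Nat.find hex ≠ 0 := by
      intro h
      have := Nat.find_spec hex
      rw [h] at this
      exact absurd this (not_le.mpr hc0)
    obtain ⟨j, hj⟩ := Nat.exists_eq_succ_of_ne_zero hJ0
    refine Set.mem_iUnion.mpr ⟨j + 2, ?_⟩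
    have h1 : c (j+1) ≤ r := by
      have hh := Nat.find_spec hex
      rw [hj] at hh
      exact hh
    have h2 : r < c j := by
      have := Nat.find_min hex (by omega : j < Nat.find hex)
      push_neg at this
      exact this
    exact ⟨h1, h2⟩
  -- the term bounds
  set C0 : ℝ := t' * ((K0:ℝ) + 1) - (K0:ℝ) * t with hC0
  set ρ : ℝ≥0∞ := ENNReal.ofReal (Real.exp (t' - t)) with hρ
  set T : ℕ → ℝ≥0∞ := fun n => match n with
    | 0 => 0
    | 1 => g (c 0)
    | (j+2) => ENNReal.ofReal (Real.exp C0) * ρ ^ j with hTdef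
  have hterm : ∀ n : ℕ, ∫⁻ r in s n, g r ∂(ν t) ≤ T n := by
    intro n
    match n with
    | 0 =>
      exact le_of_eq (setLIntegral_measure_zero _ _ (hzero t ht))
    | 1 =>
      calc ∫⁻ r in Set.Ici (c 0), g r ∂(ν t)
          ≤ ∫⁻ _ in Set.Ici (c 0), g (c 0) ∂(ν t) :=
            setLIntegral_mono' measurableSet_Ici fun r hr => hganti hr
        _ = g (c 0) * (ν t) (Set.Ici (c 0)) := setLIntegral_const _ _
        _ ≤ g (c 0) * 1 := by
            apply mul_le_mul_right
            exact le_trans (measure_mono (Set.Ici_subset_Ici.mpr (hcpos 0).le)) (hIci1 t ht)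
        _ = g (c 0) := mul_one _
    | (j+2) =>
      have hck1 : (0:ℝ) < c (j+1) := hcpos (j+1)
      have hcc : c (j+1) ≤ c j := hcanti j (j+1) (by omega)
      have hb1 : ∫⁻ r in Set.Ico (c (j+1)) (c j), g r ∂(ν t)
          ≤ g (c (j+1)) * (ν t) (Set.Ico (c (j+1)) (c j)) := by
        calc ∫⁻ r in Set.Ico (c (j+1)) (c j), g r ∂(ν t)
            ≤ ∫⁻ _ in Set.Ico (c (j+1)) (c j), g (c (j+1)) ∂(ν t) :=
              setLIntegral_mono' measurableSet_Ico fun r hr => hganti hr.1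
          _ = g (c (j+1)) * (ν t) (Set.Ico (c (j+1)) (c j)) := setLIntegral_const _ _
      -- bound g (c (j+1))
      have hgb : g (c (j+1)) ≤ ENNReal.ofReal (Real.exp (t' * ((K0 + (j+1) : ℕ):ℝ))) := by
        have h1 : g (c (j+1)) = specN μ σ x ((K0 + (j+1) : ℕ):ℝ) :=
          (hspec _ (hτpos (j+1))).symm
        rw [h1]
        apply hspecbd
        apply le_trans hK0
        push_cast
        linarith [Nat.cast_nonneg (α := ℝ) j]
      -- bound the measure
      have hνb : (ν t) (Set.Ico (c (j+1)) (c j))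
          ≤ ENNReal.ofReal (Real.exp (-((K0 + j : ℕ):ℝ) * t)) := by
        rw [hν t ht _ _ hck1.le hcc]
        apply ENNReal.ofReal_le_ofReal
        have hσcj : σ (c j) ≤ Real.exp (-((K0 + j : ℕ):ℝ)) :=
          hle _ (hτpos j) _ (hcpos j).le le_rfl
        have h0cj : 0 ≤ σ (c j) := (hσrange _ (hcpos j).le).1
        have h2 : σ (c j) ^ t ≤ Real.exp (-((K0 + j : ℕ):ℝ)) ^ t :=
          Real.rpow_le_rpow h0cj hσcj ht.le
        rw [← Real.exp_mul] at h2
        have h3 : (0:ℝ) ≤ σ (c (j+1)) ^ t :=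
          Real.rpow_nonneg (hσrange _ (hcpos (j+1)).le).1 t
        linarith
      calc ∫⁻ r in Set.Ico (c (j+1)) (c j), g r ∂(ν t)
          ≤ ENNReal.ofReal (Real.exp (t' * ((K0 + (j+1) : ℕ):ℝ)))
            * ENNReal.ofReal (Real.exp (-((K0 + j : ℕ):ℝ) * t)) :=
            le_trans hb1 (mul_le_mul' hgb hνb)
        _ = ENNReal.ofReal (Real.exp C0) * ρ ^ j := by
            rw [← ENNReal.ofReal_mul (Real.exp_nonneg _), ← Real.exp_add]
            rw [hρ, ← ENNReal.ofReal_pow (Real.exp_nonneg _), ← Real.exp_nat_mul,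
              ← ENNReal.ofReal_mul (Real.exp_nonneg _), ← Real.exp_add]
            congr 2
            rw [hC0]
            push_cast
            ring
  -- put everything together
  have hρlt1 : ρ < 1 := ENNReal.ofReal_lt_one.mpr (Real.exp_lt_one_iff.mpr (by linarith))
  calc ∫⁻ r in Set.Ici (0:ℝ), g r ∂(ν t)
      ≤ ∫⁻ r in ⋃ n : ℕ, s n, g r ∂(ν t) := lintegral_mono_set hcov
    _ ≤ ∑' n : ℕ, ∫⁻ r in s n, g r ∂(ν t) := lintegral_iUnion_le _ _
    _ ≤ ∑' n : ℕ, T n := ENNReal.tsum_le_tsum hterm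
    _ < ⊤ := by
        have hsum : ∑' n : ℕ, T n
            = (∑ i ∈ Finset.range 2, T i) + ∑' j : ℕ, T (j + 2) :=
          (Summable.sum_add_tsum_nat_add' (f := T) (k := 2) ENNReal.summable).symm
        rw [hsum]
        apply ENNReal.add_lt_top.mpr
        constructor
        · rw [Finset.sum_range_succ, Finset.sum_range_one]
          apply ENNReal.add_lt_top.mpr
          exact ⟨by simp [hTdef], lt_top_iff_ne_top.mpr (hgne (c 0) (hcpos 0))⟩
        · have : ∑' j : ℕ, T (j + 2) = ENNReal.ofReal (Real.exp C0) * ∑' j : ℕ, ρ ^ j :=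
            ENNReal.tsum_mul_left
          rw [this, ENNReal.tsum_geometric]
          apply ENNReal.mul_lt_top ENNReal.ofReal_lt_top
          rw [lt_top_iff_ne_top]
          apply ENNReal.inv_ne_top.mpr
          rw [ne_eq, tsub_eq_zero_iff_le]
          exact not_le.mpr hρlt1

theorem statement_7
    {X : Type*} [MetricSpace X] [TopologicalSpace.SeparableSpace X]
    [MeasurableSpace X] [BorelSpace X]
    (hd : ∀ x y z : X, dist x z ≤ max (dist x y) (dist y z))
    (hcb : ∀ (x : X) (r : ℝ), IsCompact (closedBall x r))
    (μ : Measure X)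
    (hμpos : ∀ (x : X) (r : ℝ), 0 < r → 0 < μ (closedBall x r))
    (hμfin : ∀ (x : X) (r : ℝ), 0 < r → μ (closedBall x r) < ⊤)
    (σ : ℝ → ℝ)
    (hσmono : StrictMonoOn σ (Set.Ici 0))
    (hσrange : ∀ r : ℝ, 0 ≤ r → σ r ∈ Set.Icc (0:ℝ) 1)
    (hσlc : ∀ r : ℝ, 0 < r → ContinuousWithinAt σ (Set.Iic r) r)
    (hσzero : Tendsto σ (nhdsWithin 0 (Set.Ioi 0)) (nhds 0))
    (hσtop : Tendsto σ atTop (nhds 1))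
    (ν : ℝ → Measure ℝ)
    (hν : ∀ t : ℝ, 0 < t → ∀ a b : ℝ, 0 ≤ a → a ≤ b →
      ν t (Set.Ico a b) = ENNReal.ofReal (σ b ^ t - σ a ^ t))
    (hνneg : ∀ t : ℝ, 0 < t → ν t (Set.Iio 0) = 0)
    (x : X) :
    AntitoneOn (fun t : ℝ => heatK μ ν t x x) (Set.Ioi 0) ∧
    ∀ t : ℝ, 0 < t →
      limsup (fun τ : ℝ => ((Real.log ((specN μ σ x τ).toReal) / τ : ℝ) : EReal)) atTop
        < (t : EReal) →
      heatK μ ν t x x < ⊤ := by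
  have hσ0' : ∀ r : ℝ, 0 ≤ r → 0 ≤ σ r := fun r hr => (hσrange r hr).1
  have hσ1' : ∀ r : ℝ, 0 ≤ r → σ r ≤ 1 := fun r hr => (hσrange r hr).2
  have hσ00 : σ 0 = 0 := by
    have h1 : 0 ≤ σ 0 := (hσrange 0 le_rfl).1
    have h2 : σ 0 ≤ 0 := by
      apply ge_of_tendsto hσzero
      filter_upwards [eventually_mem_nhdsWithin] with r hr
      exact (hσmono (Set.mem_Ici.mpr le_rfl) (Set.mem_Ici.mpr (le_of_lt hr)) hr).le
    linarith
  have hσpos : ∀ r : ℝ, 0 < r → 0 < σ r := by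
    intro r hr
    have := hσmono (Set.mem_Ici.mpr le_rfl) (Set.mem_Ici.mpr hr.le) hr
    rwa [hσ00] at this
  have hσlt1 : ∀ r : ℝ, 0 ≤ r → σ r < 1 := by
    intro r hr
    have h1 := hσmono (Set.mem_Ici.mpr hr) (Set.mem_Ici.mpr (by linarith)) (lt_add_one r)
    have h2 := (hσrange (r+1) (by linarith)).2
    linarith
  have hIco : ∀ t : ℝ, 0 < t → ∀ b : ℝ, 0 ≤ b →
      ν t (Set.Ico 0 b) = ENNReal.ofReal (σ b ^ t) := by
    intro t ht b0 hb0
    rw [hν t ht 0 b0 le_rfl hb0, hσ00, Real.zero_rpow ht.ne', sub_zero]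
  have hzero : ∀ t : ℝ, 0 < t → ν t {0} = 0 := by
    intro t ht
    have hb : ∀ ε : ℝ, 0 < ε → ν t {0} ≤ ENNReal.ofReal (σ ε ^ t) := by
      intro ε hε
      rw [← hIco t ht ε hε.le]
      apply measure_mono
      rw [Set.singleton_subset_iff]
      exact ⟨le_rfl, hε⟩
    have h1 : Tendsto (fun ε : ℝ => ENNReal.ofReal (σ ε ^ t)) (𝓝[>] (0:ℝ)) (𝓝 0) := by
      have h2 : Tendsto (fun y : ℝ => y ^ t) (𝓝 0) (𝓝 0) := by
        have := (Real.continuousAt_rpow_const 0 t (Or.inr ht.le)).tendsto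
        rwa [Real.zero_rpow ht.ne'] at this
      have h3 := (ENNReal.continuous_ofReal.tendsto 0).comp (h2.comp hσzero)
      rw [ENNReal.ofReal_zero] at h3
      exact h3
    have h4 : ν t {0} ≤ 0 := by
      apply ge_of_tendsto h1
      filter_upwards [eventually_mem_nhdsWithin] with ε hε
      exact hb ε hε
    exact le_zero_iff.mp h4
  have hIci1 : ∀ t : ℝ, 0 < t → ν t (Set.Ici 0) ≤ 1 := by
    intro t ht
    have hUnion : Set.Ici (0:ℝ) = ⋃ n : ℕ, Set.Ico 0 (n : ℝ) := by
      ext r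
      simp only [Set.mem_Ici, Set.mem_iUnion, Set.mem_Ico]
      constructor
      · intro h
        exact ⟨⌊r⌋₊ + 1, h, by exact_mod_cast Nat.lt_floor_add_one r⟩
      · rintro ⟨n, h0, _⟩; exact h0
    have hdir : Directed (· ⊆ ·) (fun n : ℕ => Set.Ico (0:ℝ) n) := by
      intro m n
      exact ⟨max m n, fun r ⟨h0, h1⟩ => ⟨h0, lt_of_lt_of_le h1 (by exact_mod_cast le_max_left m n)⟩,
        fun r ⟨h0, h1⟩ => ⟨h0, lt_of_lt_of_le h1 (by exact_mod_cast le_max_right m n)⟩⟩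
    rw [hUnion, hdir.measure_iUnion]
    apply iSup_le
    intro n
    rw [hIco t ht n (Nat.cast_nonneg n)]
    exact ENNReal.ofReal_le_one.mpr
      (Real.rpow_le_one (hσrange _ (Nat.cast_nonneg n)).1 (hσrange _ (Nat.cast_nonneg n)).2 ht.le)
  constructor
  · intro t1 ht1 t2 ht2 h12
    simp only [Set.mem_Ioi] at ht1 ht2
    simp only [heatK, dist_self]
    exact aux_mono μ hμpos σ hσ0' hσ1' ν hIco hzero x t1 t2 ht1 ht2 h12
  · intro t ht hlim
    simp only [heatK, dist_self]
    exact aux_fin μ hμpos hμfin σ hσmono hσrange hσlc hσzero hσtop ν hν hσ00 hσpos hσlt1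
      hzero hIci1 x t ht hlim
end
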